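/- arXiv:1805.05637 — 4 statements merged into one kernel-verified Lean document; each statement's English description precedes it below -/
import Mathlib

section
/- Let G be a countable directed graph, F : G_Ar → ℝ a potential, β ∈ ℝ, and v, w vertices of G such that there exist finite paths from v to w and from w to v. Then {βF(μ) − βF(μ') : μ, μ' ∈ P_f(G), s(μ) = r(μ) = s(μ') = r(μ') = v} = {βF(μ) − βF(μ') : μ, μ' ∈ P_f(G), s(μ) = r(μ) = s(μ') = r(μ') = w}. In particular, the subgroup of ℝ whose closure defines R_{G,F} does not depend on the choice of vertex v in the strongly connected set NW_G of non-wandering vertices. -/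
open MeasureTheory
open scoped ENNReal

/-- A countable directed graph: countable sets of vertices and arrows together with
source and range maps. -/
structure CDG where
  V : Type
  A : Type
  countV : Countable V
  countA : Countable A
  src : A → V
  rng : A → V

attribute [instance] CDG.countV CDG.countA

namespace CDG

/-- The space `P(G)` of infinite paths in `G`. -/
abbrev PathSpace (G : CDG) : Type :=
  {p : ℕ → G.A // ∀ i : ℕ, G.rng (p i) = G.src (p (i + 1))}

/-- The source vertex of an infinite path. -/
def isrc {G : CDG} (p : G.PathSpace) : G.V := G.src (p.1 0)

/-- The shift map `σ` on `P(G)`. -/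
def shift {G : CDG} (p : G.PathSpace) : G.PathSpace :=
  ⟨fun i => p.1 (i + 1), fun i => p.2 (i + 1)⟩

/-- A countable set carries the discrete (Borel) σ-algebra. -/
instance (G : CDG) : MeasurableSpace G.A := ⊤

/-- A finite path in `G`: a base vertex together with a (possibly empty) string of
composable arrows starting at the base vertex.  A finite path with no arrows is a vertex. -/
structure FinPath (G : CDG) where
  base : G.V
  arrows : List G.A
  head_src : ∀ a ∈ arrows.head?, G.src a = base
  chain : arrows.Chain' fun a b => G.rng a = G.src b

namespace FinPath

variable {G : CDG}

/-- The length `|μ|` of a finite path. -/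
def length (μ : FinPath G) : ℕ := μ.arrows.length

/-- The source `s(μ)` of a finite path. -/
def fsrc (μ : FinPath G) : G.V := μ.base

/-- The range `r(μ)` of a finite path. -/
def frng (μ : FinPath G) : G.V := μ.arrows.getLast?.elim μ.base G.rng

/-- A vertex, regarded as a finite path of length `0`. -/
def ofVertex (G : CDG) (v : G.V) : FinPath G :=
  ⟨v, [], by intro a ha; simp at ha, List.IsChain.nil⟩

/-- Concatenation `μδ` of composable finite paths. -/
def concat (μ δ : FinPath G) (h : δ.base = μ.frng) : FinPath G where
  base := μ.base
  arrows := μ.arrows ++ δ.arrows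
  head_src := by
    intro a ha
    cases hμ : μ.arrows with
    | nil =>
        rw [hμ] at ha
        simp only [List.nil_append] at ha
        have h1 : G.src a = δ.base := δ.head_src a ha
        have h2 : μ.frng = μ.base := by simp [FinPath.frng, hμ]
        rw [h1, h, h2]
    | cons b l =>
        rw [hμ] at ha
        simp only [List.cons_append, List.head?_cons, Option.mem_def,
          Option.some.injEq] at ha
        cases ha
        exact μ.head_src _ (by rw [hμ]; rfl)
  chain := by
    refine List.IsChain.append μ.chain δ.chain ?_
    intro x hx y hy
    rw [Option.mem_def] at hx
    have h1 : μ.frng = G.rng x := by simp [FinPath.frng, hx]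
    have h2 : G.src y = δ.base := δ.head_src y hy
    rw [h2, h, h1]

end FinPath

/-- The extension of a potential `F : G_Ar → ℝ` to finite paths:
`F(μ) = Σ_{i} F(a_i)`, with `F(v) = 0` for vertices. -/
def pot {G : CDG} (F : G.A → ℝ) (μ : FinPath G) : ℝ := (μ.arrows.map F).sum

/-- The cylinder set `Z(μ)` of a finite path `μ`. -/
def cyl {G : CDG} (μ : FinPath G) : Set G.PathSpace :=
  {p | G.src (p.1 0) = μ.base ∧
    ∀ (i : ℕ) (h : i < μ.arrows.length), p.1 i = μ.arrows.get ⟨i, h⟩}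

/-- The cylinder set `Z(v)` of a vertex `v`. -/
def cylV (G : CDG) (v : G.V) : Set G.PathSpace := {p | G.src (p.1 0) = v}

/-- An `e^{βF}`-conformal measure on `P(G)`: a non-zero Borel measure giving finite
measure to each `Z(v)` and satisfying `m(σ(B ∩ Z(a))) = e^{βF(a)} m(B ∩ Z(a))`. -/
structure IsConformal (G : CDG) (F : G.A → ℝ) (β : ℝ)
    (m : Measure G.PathSpace) : Prop where
  ne_zero : m ≠ 0
  vert_fin : ∀ v : G.V, m (cylV G v) < ⊤
  conformal : ∀ (a : G.A) (B : Set G.PathSpace), MeasurableSet B →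
      m (shift '' (B ∩ {p : G.PathSpace | p.1 0 = a})) =
        ENNReal.ofReal (Real.exp (β * F a)) * m (B ∩ {p : G.PathSpace | p.1 0 = a})

/-- The set `NW_G` of non-wandering vertices: those supporting a loop. -/
def NW (G : CDG) : Set G.V :=
  {v | ∃ μ : FinPath G, 0 < μ.length ∧ μ.fsrc = v ∧ μ.frng = v}

/-- The set `V_∞` of sinks and infinite emitters. -/
def Vinf (G : CDG) : Set G.V :=
  {v | (∀ a : G.A, G.src a ≠ v) ∨ {a : G.A | G.src a = v}.Infinite}

/-- A hereditary subset of vertices. -/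
def Hereditary (G : CDG) (H : Set G.V) : Prop :=
  ∀ a : G.A, G.src a ∈ H → G.rng a ∈ H

/-- A saturated subset of vertices. -/
def Saturated (G : CDG) (H : Set G.V) : Prop :=
  ∀ v : G.V, v ∉ Vinf G → (∀ a : G.A, G.src a = v → G.rng a ∈ H) → v ∈ H

/-- `G` is cofinal when the only non-empty hereditary and saturated subset of
vertices is the set of all vertices. -/
def Cofinal (G : CDG) : Prop :=
  ∀ H : Set G.V, H.Nonempty → Hereditary G H → Saturated G H → H = Set.univ

/-- `P(G)_rec`: the paths passing through every arrow of `NW_Ar` infinitely often. -/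
def recSet (G : CDG) : Set G.PathSpace :=
  {p | ∀ a : G.A, G.src a ∈ NW G → ∀ n : ℕ, ∃ i ≥ n, p.1 i = a}

/-- `P(G)_wan`: the paths visiting every vertex at most finitely many times. -/
def wanSet (G : CDG) : Set G.PathSpace :=
  {p | ∀ v : G.V, {i : ℕ | G.src (p.1 i) = v}.Finite}

/-- The matrix entry `A(β)^n_{v,w} = Σ_μ e^{-βF(μ)} ∈ [0,∞]`, summing over finite
paths `μ` of length `n` with `s(μ) = v` and `r(μ) = w`. -/
noncomputable def Apow (G : CDG) (F : G.A → ℝ) (β : ℝ) (n : ℕ) (v w : G.V) : ℝ≥0∞ :=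
  ∑' μ : {μ : FinPath G // μ.length = n ∧ μ.fsrc = v ∧ μ.frng = w},
    ENNReal.ofReal (Real.exp (-(β * pot F μ.1)))

/-- An `A(β)`-harmonic vector: non-zero, finite, non-negative, and harmonic at
every vertex. -/
def IsHarmonicVec (G : CDG) (F : G.A → ℝ) (β : ℝ) (ψ : G.V → ℝ≥0∞) : Prop :=
  ψ ≠ 0 ∧ (∀ v : G.V, ψ v ≠ ⊤) ∧
    ∀ v : G.V, ψ v =
      ∑' a : {a : G.A // G.src a = v},
        ENNReal.ofReal (Real.exp (-(β * F a.1))) * ψ (G.rng a.1)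

end CDG

namespace CDG

variable {G : CDG}

lemma FinPath.concat_fsrc (μ δ : FinPath G) (h : δ.base = μ.frng) :
    (μ.concat δ h).fsrc = μ.fsrc := rfl

lemma FinPath.concat_frng (μ δ : FinPath G) (h : δ.base = μ.frng) :
    (μ.concat δ h).frng = δ.frng := by
  have key : ∀ (l m : List G.A) (x : G.V),
      (l ++ m).getLast?.elim x G.rng = m.getLast?.elim (l.getLast?.elim x G.rng) G.rng := by
    intro l m x
    induction m using List.reverseRecOn with
    | nil => simp
    | append_singleton l' a _ => simp [← List.append_assoc]
  show (μ.arrows ++ δ.arrows).getLast?.elim μ.base G.rng = δ.arrows.getLast?.elim δ.base G.rng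
  rw [key, h]; rfl

lemma pot_concat (F : G.A → ℝ) (μ δ : FinPath G) (h : δ.base = μ.frng) :
    pot F (μ.concat δ h) = pot F μ + pot F δ := by
  simp [pot, FinPath.concat]

lemma stmt2_subset (F : G.A → ℝ) (β : ℝ) (v w : G.V)
    (hvw : ∃ μ : FinPath G, μ.fsrc = v ∧ μ.frng = w)
    (hwv : ∃ μ : FinPath G, μ.fsrc = w ∧ μ.frng = v) :
    {x : ℝ | ∃ μ μ' : FinPath G,
      μ.fsrc = v ∧ μ.frng = v ∧ μ'.fsrc = v ∧ μ'.frng = v ∧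
      x = β * pot F μ - β * pot F μ'} ⊆
    {x : ℝ | ∃ μ μ' : FinPath G,
      μ.fsrc = w ∧ μ.frng = w ∧ μ'.fsrc = w ∧ μ'.frng = w ∧
      x = β * pot F μ - β * pot F μ'} := by
  obtain ⟨q, hq1, hq2⟩ := hvw
  obtain ⟨p, hp1, hp2⟩ := hwv
  rintro x ⟨μ, μ', h1, h2, h3, h4, rfl⟩
  have hb : μ.base = p.frng := by rw [hp2, ← h1]; rfl
  have hb' : μ'.base = p.frng := by rw [hp2, ← h3]; rfl
  have hc : q.base = (p.concat μ hb).frng := by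
    rw [FinPath.concat_frng, h2, ← hq1]; rfl
  have hc' : q.base = (p.concat μ' hb').frng := by
    rw [FinPath.concat_frng, h4, ← hq1]; rfl
  refine ⟨(p.concat μ hb).concat q hc, (p.concat μ' hb').concat q hc', ?_, ?_, ?_, ?_, ?_⟩
  · rw [FinPath.concat_fsrc, FinPath.concat_fsrc]; exact hp1
  · rw [FinPath.concat_frng]; exact hq2
  · rw [FinPath.concat_fsrc, FinPath.concat_fsrc]; exact hp1
  · rw [FinPath.concat_frng]; exact hq2
  · rw [pot_concat, pot_concat, pot_concat, pot_concat]; ring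

end CDG

open CDG in
/-- if there are finite paths from `v` to `w` and from `w` to `v`, the sets
of differences `βF(μ) - βF(μ')` over loops based at `v`, resp. at `w`, coincide. -/
theorem stmt2 (G : CDG) (F : G.A → ℝ) (β : ℝ) (v w : G.V)
    (hvw : ∃ μ : FinPath G, μ.fsrc = v ∧ μ.frng = w)
    (hwv : ∃ μ : FinPath G, μ.fsrc = w ∧ μ.frng = v) :
    {x : ℝ | ∃ μ μ' : FinPath G,
      μ.fsrc = v ∧ μ.frng = v ∧ μ'.fsrc = v ∧ μ'.frng = v ∧
      x = β * pot F μ - β * pot F μ'} =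
    {x : ℝ | ∃ μ μ' : FinPath G,
      μ.fsrc = w ∧ μ.frng = w ∧ μ'.fsrc = w ∧ μ'.frng = w ∧
      x = β * pot F μ - β * pot F μ'} := by
  exact Set.Subset.antisymm (CDG.stmt2_subset F β v w hvw hwv)
    (CDG.stmt2_subset F β w v hwv hvw)
end

section
/- Let G be a countable directed graph which is cofinal and whose set NW_G of non-wandering vertices is non-empty, F a potential on G, and β ∈ ℝ. Then no e^{βF}-conformal measure annihilates P(NW_G): for every e^{βF}-conformal measure m one has m(P(NW_G)) > 0, where P(NW_G) = {p ∈ P(G) : s(p_i) ∈ NW_G for all i}. -/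
open MeasureTheory
open scoped ENNReal

namespace CDG

/-! ### Auxiliary combinatorial material -/

/-- One-step reachability. -/
def Step (G : CDG) (x y : G.V) : Prop := ∃ a : G.A, G.src a = x ∧ G.rng a = y

/-- Reachability by a finite (possibly empty) path. -/
def Reach (G : CDG) : G.V → G.V → Prop := Relation.ReflTransGen (Step G)

namespace FinPath

variable {G : CDG}

/-- An arrow, as a finite path of length one. -/
def single (G : CDG) (a : G.A) : FinPath G :=
  ⟨G.src a, [a], by intro b hb; simp only [List.head?_cons, Option.mem_def,
    Option.some.injEq] at hb; rw [← hb], List.isChain_singleton a⟩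

@[simp] lemma fsrc_single (a : G.A) : (single G a).fsrc = G.src a := rfl

@[simp] lemma frng_single (a : G.A) : (single G a).frng = G.rng a := rfl

@[simp] lemma length_single (a : G.A) : (single G a).length = 1 := rfl

@[simp] lemma fsrc_concat (μ δ : FinPath G) (h : δ.base = μ.frng) :
    (μ.concat δ h).fsrc = μ.fsrc := rfl

@[simp] lemma length_concat (μ δ : FinPath G) (h : δ.base = μ.frng) :
    (μ.concat δ h).length = μ.length + δ.length := List.length_append

@[simp] lemma frng_concat (μ δ : FinPath G) (h : δ.base = μ.frng) :
    (μ.concat δ h).frng = δ.frng := by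
  show (μ.arrows ++ δ.arrows).getLast?.elim μ.base G.rng = δ.frng
  cases hδ : δ.arrows with
  | nil =>
      have : δ.frng = δ.base := by simp [FinPath.frng, hδ]
      rw [this, h, List.append_nil]; rfl
  | cons b l =>
      obtain ⟨x, hx⟩ : ∃ x, (b :: l).getLast? = some x :=
        ⟨(b :: l).getLast (by simp), List.getLast?_eq_getLast _⟩
      rw [List.getLast?_append_of_ne_nil _ (List.cons_ne_nil b l), FinPath.frng, hδ, hx]
      rfl

end FinPath

variable {G : CDG}

/-- Reachability produces a finite path. -/
lemma reach_toFinPath {x y : G.V} (h : Reach G x y) :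
    ∃ μ : FinPath G, μ.fsrc = x ∧ μ.frng = y := by
  induction h with
  | refl => exact ⟨FinPath.ofVertex G x, rfl, rfl⟩
  | tail hr hs ih =>
      obtain ⟨μ, h1, h2⟩ := ih
      obtain ⟨a, ha1, ha2⟩ := hs
      refine ⟨μ.concat (FinPath.single G a) (by rw [h2]; exact ha1), ?_, ?_⟩
      · simpa using h1
      · simpa using ha2

/-- A vertex which reaches `y` and is reachable from `y` in one step is non-wandering. -/
lemma nw_of_reach_step {x y : G.V} (h1 : Reach G x y) (h2 : Step G y x) : x ∈ NW G := by
  obtain ⟨ν, hνs, hνr⟩ := reach_toFinPath h1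
  obtain ⟨a, ha1, ha2⟩ := h2
  refine ⟨ν.concat (FinPath.single G a) (by rw [hνr]; exact ha1), ?_, ?_, ?_⟩
  · rw [FinPath.length_concat, FinPath.length_single]; omega
  · simpa using hνs
  · simpa using ha2

/-- Auxiliary: a composable chain of arrows yields reachability from its base
to its final range. -/
lemma list_reach : ∀ (l : List G.A) (b : G.V), (∀ a ∈ l.head?, G.src a = b) →
    l.Chain' (fun a c => G.rng a = G.src c) → Reach G b (l.getLast?.elim b G.rng) := by
  intro l
  induction l with
  | nil => intro b _ _; exact Relation.ReflTransGen.refl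
  | cons a l ih =>
      intro b hb hc
      obtain ⟨hhead, hchain⟩ := List.isChain_cons.mp hc
      have hstep : Step G b (G.rng a) := ⟨a, hb a rfl, rfl⟩
      have hrest : Reach G (G.rng a) (l.getLast?.elim (G.rng a) G.rng) :=
        ih (G.rng a) (fun c hc' => (hhead c hc').symm) hchain
      have hkey : (a :: l).getLast?.elim b G.rng = l.getLast?.elim (G.rng a) G.rng := by
        cases l with
        | nil => rfl
        | cons c l' => rfl
      rw [hkey]
      exact Relation.ReflTransGen.head hstep hrest

/-- A non-wandering vertex admits a loop in `Step`/`Reach` form. -/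
lemma nw_loop {v : G.V} (hv : v ∈ NW G) : ∃ u, Step G v u ∧ Reach G u v := by
  obtain ⟨μ, hlen, hsrc, hrng⟩ := hv
  cases harr : μ.arrows with
  | nil => exfalso; rw [FinPath.length, harr] at hlen; simp at hlen
  | cons a l =>
      have hsa : G.src a = v := by
        rw [← hsrc]; exact μ.head_src a (by rw [harr]; rfl)
      have hchain := μ.chain
      rw [harr] at hchain
      obtain ⟨hhead, hchain'⟩ := List.isChain_cons.mp hchain
      have hreach : Reach G (G.rng a) (l.getLast?.elim (G.rng a) G.rng) :=
        list_reach l (G.rng a) (fun c hc' => (hhead c hc').symm) hchain'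
      have hkey : l.getLast?.elim (G.rng a) G.rng = v := by
        rw [← hrng, FinPath.frng, harr]
        cases l with
        | nil => rfl
        | cons c l' => rfl
      exact ⟨G.rng a, ⟨a, hsa, rfl⟩, hkey ▸ hreach⟩

/-- The inductive saturation closure of a set of vertices. -/
inductive SatC (G : CDG) (H : Set G.V) : G.V → Prop
  | base {v : G.V} : v ∈ H → SatC G H v
  | step {v : G.V} : v ∉ Vinf G → (∀ a : G.A, G.src a = v → SatC G H (G.rng a)) →
      SatC G H v

lemma satC_hered {H : Set G.V} (hher : Hereditary G H) {x : G.V} (h : SatC G H x) :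
    ∀ a : G.A, G.src a = x → SatC G H (G.rng a) := by
  induction h with
  | base hv => intro a ha; exact SatC.base (hher a (by rw [ha]; exact hv))
  | step hv hs ih => intro a ha; exact hs a ha

lemma satC_all (hcof : Cofinal G) {H : Set G.V} (hne : H.Nonempty)
    (hher : Hereditary G H) : ∀ v, SatC G H v := by
  have key : {v | SatC G H v} = Set.univ := by
    refine hcof _ ⟨hne.choose, SatC.base hne.choose_spec⟩ ?_ ?_
    · intro a ha
      exact satC_hered hher ha a rfl
    · intro v hv hs
      exact SatC.step hv hs
  intro v
  have : v ∈ {v | SatC G H v} := by rw [key]; trivial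
  exact this

/-- In a cofinal graph, every non-wandering vertex is reachable from any given
non-wandering vertex. -/
lemma nw_reach (hcof : Cofinal G) {v : G.V} (hv : v ∈ NW G) :
    ∀ t ∈ NW G, Reach G v t := by
  have hher : Hereditary G {u | Reach G v u} := by
    intro a ha
    exact Relation.ReflTransGen.tail ha ⟨a, rfl, rfl⟩
  have hall := satC_all hcof ⟨v, Relation.ReflTransGen.refl⟩ hher
  have main : ∀ t, SatC G {u | Reach G v u} t → t ∈ NW G → Reach G v t := by
    intro t ht
    induction ht with
    | base hv' => intro _; exact hv'
    | step hvinf hs ih =>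
        intro htnw
        obtain ⟨u, ⟨a, ha1, ha2⟩, hru⟩ := nw_loop htnw
        have hunw : u ∈ NW G := nw_of_reach_step hru ⟨a, ha1, ha2⟩
        have : Reach G v (G.rng a) := ih a ha1 (ha2 ▸ hunw)
        exact this.trans (ha2 ▸ hru)
  intro t htnw
  exact main t (hall t) htnw

/-- In a cofinal graph with `NW G` non-empty, every vertex reaches a
non-wandering vertex. -/
lemma reach_nw (hcof : Cofinal G) (hne : (NW G).Nonempty) :
    ∀ u : G.V, ∃ w ∈ NW G, Reach G u w := by
  obtain ⟨v₀, hv₀⟩ := hne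
  by_contra hcon
  push_neg at hcon
  obtain ⟨u, hu⟩ := hcon
  set Q : Set G.V := {x | ¬ ∃ w ∈ NW G, Reach G x w} with hQ
  have hQu : u ∈ Q := by
    intro ⟨w, hw, hr⟩; exact (hu w hw) hr
  have hher : Hereditary G Q := by
    intro a ha hmem
    obtain ⟨w, hw, hr⟩ := hmem
    exact ha ⟨w, hw, Relation.ReflTransGen.head ⟨a, rfl, rfl⟩ hr⟩
  have hsat : Saturated G Q := by
    intro x hxinf hsucc hmem
    obtain ⟨w, hw, hr⟩ := hmem
    rcases Relation.ReflTransGen.cases_head hr with heq | ⟨c, ⟨a, ha1, ha2⟩, hr'⟩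
    · subst heq
      obtain ⟨u', ⟨a, ha1, ha2⟩, hru'⟩ := nw_loop hw
      exact (hsucc a ha1) ⟨x, hw, ha2 ▸ hru'⟩
    · exact (hsucc a ha1) ⟨w, hw, ha2 ▸ hr'⟩
  have : Q = Set.univ := hcof Q ⟨u, hQu⟩ hher hsat
  have hv₀Q : v₀ ∈ Q := by rw [this]; trivial
  exact hv₀Q ⟨v₀, hv₀, Relation.ReflTransGen.refl⟩

/-- The finite prefix of an infinite path, as a finite path. -/
lemma prefix_path (p : G.PathSpace) :
    ∀ i : ℕ, ∃ μ : FinPath G, μ.fsrc = G.src (p.1 0) ∧ μ.frng = G.src (p.1 i) ∧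
      μ.length = i := by
  intro i
  induction i with
  | zero => exact ⟨FinPath.ofVertex G (G.src (p.1 0)), rfl, rfl, rfl⟩
  | succ i ih =>
      obtain ⟨μ, h1, h2, h3⟩ := ih
      refine ⟨μ.concat (FinPath.single G (p.1 i)) (by rw [h2]; rfl), ?_, ?_, ?_⟩
      · simpa using h1
      · simpa using p.2 i
      · simp [h3]

/-- In a cofinal graph, every infinite path starting at a non-wandering vertex
visits only non-wandering vertices. -/
lemma path_in_nw (hcof : Cofinal G) {v₀ : G.V} (hv₀ : v₀ ∈ NW G)
    (p : G.PathSpace) (hp : G.src (p.1 0) = v₀) : ∀ i : ℕ, G.src (p.1 i) ∈ NW G := by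
  intro i
  rcases Nat.eq_zero_or_pos i with rfl | hi
  · rw [hp]; exact hv₀
  · obtain ⟨μ₁, hs1, hr1, hl1⟩ := prefix_path p i
    obtain ⟨w, hw, hxw⟩ := reach_nw hcof ⟨v₀, hv₀⟩ (G.src (p.1 i))
    have hwv : Reach G w v₀ := nw_reach hcof hw v₀ hv₀
    have hxv : Reach G (G.src (p.1 i)) v₀ := hxw.trans hwv
    obtain ⟨ν, hνs, hνr⟩ := reach_toFinPath hxv
    refine ⟨ν.concat μ₁ (by show μ₁.base = ν.frng; rw [hνr, ← hp, ← hs1]; rfl), ?_, ?_, ?_⟩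
    · simp [FinPath.length_concat, hl1]
      omega
    · simpa using hνs
    · simpa using hr1

/-! ### Auxiliary measure-theoretic material -/

lemma shift_image_arrow (a : G.A) :
    shift '' {p : G.PathSpace | p.1 0 = a} = cylV G (G.rng a) := by
  ext q
  constructor
  · rintro ⟨p, hp, rfl⟩
    show G.src ((shift p).1 0) = G.rng a
    have h2 := p.2 0
    show G.src (p.1 1) = G.rng a
    rw [← h2, hp]
  · intro hq
    refine ⟨⟨fun n => Nat.rec a (fun i _ => q.1 i) n, ?_⟩, ?_, ?_⟩
    · intro i
      cases i with
      | zero => exact hq.symm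
      | succ i => exact q.2 i
    · exact rfl
    · exact Subtype.ext rfl

variable {F : G.A → ℝ} {β : ℝ} {m : Measure G.PathSpace}

lemma cyl_rng (hm : IsConformal G F β m) (a : G.A) :
    m (cylV G (G.rng a)) =
      ENNReal.ofReal (Real.exp (β * F a)) * m {p : G.PathSpace | p.1 0 = a} := by
  have h := hm.conformal a Set.univ MeasurableSet.univ
  rwa [Set.univ_inter, shift_image_arrow] at h

lemma cylV_pos (hcof : Cofinal G) (hm : IsConformal G F β m) (v : G.V) :
    0 < m (cylV G v) := by
  set H₀ : Set G.V := {v | m (cylV G v) = 0} with hH₀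
  have hher : Hereditary G H₀ := by
    intro a ha
    have hsub : {p : G.PathSpace | p.1 0 = a} ⊆ cylV G (G.src a) := by
      intro p hp
      show G.src (p.1 0) = G.src a
      rw [hp]
    have h1 : m {p : G.PathSpace | p.1 0 = a} = 0 :=
      le_antisymm (le_trans (measure_mono hsub) (le_of_eq ha)) zero_le
    show m (cylV G (G.rng a)) = 0
    rw [cyl_rng hm a, h1, mul_zero]
  have hsat : Saturated G H₀ := by
    intro v _ hsucc
    show m (cylV G v) = 0
    refine le_antisymm ?_ zero_le
    have hzero : ∀ a : G.A, G.src a = v → m {p : G.PathSpace | p.1 0 = a} = 0 := by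
      intro a ha
      have h1 : m (cylV G (G.rng a)) = 0 := hsucc a ha
      rw [cyl_rng hm a] at h1
      rcases mul_eq_zero.mp h1 with h | h
      · exact absurd h (ENNReal.ofReal_pos.mpr (Real.exp_pos _)).ne'
      · exact h
    have hsub : cylV G v ⊆ ⋃ a : {a : G.A // G.src a = v}, {p : G.PathSpace | p.1 0 = a.1} := by
      intro p hp
      exact Set.mem_iUnion.mpr ⟨⟨p.1 0, hp⟩, rfl⟩
    calc m (cylV G v) ≤ ∑' a : {a : G.A // G.src a = v}, m {p : G.PathSpace | p.1 0 = a.1} :=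
          le_trans (measure_mono hsub) (measure_iUnion_le _)
      _ = 0 := by
          simp only [ENNReal.tsum_eq_zero]
          intro a
          exact hzero a.1 a.2
  rcases eq_or_ne (m (cylV G v)) 0 with hz | hz
  · exfalso
    have huniv : H₀ = Set.univ := hcof H₀ ⟨v, hz⟩ hher hsat
    have hall : ∀ w : G.V, m (cylV G w) = 0 := by
      intro w
      have : w ∈ H₀ := by rw [huniv]; trivial
      exact this
    have hsub : (Set.univ : Set G.PathSpace) ⊆ ⋃ w : G.V, cylV G w := by
      intro p _
      exact Set.mem_iUnion.mpr ⟨G.src (p.1 0), rfl⟩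
    have : m Set.univ = 0 := by
      refine le_antisymm ?_ zero_le
      calc m Set.univ ≤ ∑' w : G.V, m (cylV G w) :=
            le_trans (measure_mono hsub) (measure_iUnion_le _)
        _ = 0 := by simp only [ENNReal.tsum_eq_zero]; exact hall
    exact hm.ne_zero (MeasureTheory.Measure.measure_univ_eq_zero.mp this)
  · exact zero_lt_iff.mpr hz

end CDG

open CDG in
/-- for a cofinal graph with `NW_G ≠ ∅`, no `e^{βF}`-conformal measure
annihilates `P(NW_G)`. -/
theorem stmt7 (G : CDG) (hcof : Cofinal G) (hne : (NW G).Nonempty)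
    (F : G.A → ℝ) (β : ℝ) (m : MeasureTheory.Measure G.PathSpace)
    (hm : IsConformal G F β m) :
    0 < m {p : G.PathSpace | ∀ i : ℕ, G.src (p.1 i) ∈ NW G} := by
  obtain ⟨v₀, hv₀⟩ := hne
  have hpos := cylV_pos hcof hm v₀
  refine lt_of_lt_of_le hpos (measure_mono ?_)
  intro p hp
  exact path_in_nw hcof hv₀ p hp
end

section
/- Let G be a countable directed graph which is cofinal and whose set NW_G of non-wandering vertices is non-empty, F a potential on G, and β ∈ ℝ. Then every e^{βF}-conformal measure m is concentrated either on P(G)_rec or on P(G)_wan, i.e. either m(P(G) \ P(G)_rec) = 0 or m(P(G) \ P(G)_wan) = 0. -/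
open MeasureTheory
open scoped ENNReal

section Aux
open CDG Filter Topology

noncomputable def ee (x : ℝ) : ℝ≥0∞ := ENNReal.ofReal (Real.exp x)

lemma ee_ne_zero (x : ℝ) : ee x ≠ 0 := by
  simp only [ee, ne_eq, ENNReal.ofReal_eq_zero, not_le]
  exact Real.exp_pos x

lemma ee_ne_top (x : ℝ) : ee x ≠ ∞ := ENNReal.ofReal_ne_top

lemma ee_mul (x y : ℝ) : ee x * ee y = ee (x + y) := by
  rw [ee, ee, ee, ← ENNReal.ofReal_mul (Real.exp_pos x).le, ← Real.exp_add]

lemma ee_zero : ee 0 = 1 := by simp [ee, Real.exp_zero]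

lemma ee_cancel (x : ℝ) (M : ℝ≥0∞) : ee (-x) * (ee x * M) = M := by
  rw [← mul_assoc, ee_mul, neg_add_cancel, ee_zero, one_mul]

variable {G : CDG}

/-- The cylinder determined by the arrow in position `0`. -/
def ZA (a : G.A) : Set G.PathSpace := {p : G.PathSpace | p.1 0 = a}

/-- The cylinder of a list of arrows based at a vertex. -/
def Zl (v : G.V) (l : List G.A) : Set G.PathSpace :=
  {p : G.PathSpace | G.src (p.1 0) = v ∧ ∀ (i : ℕ) (h : i < l.length), p.1 i = l[i]'h}

/-- `PC v l w`: the list `l` is a finite path from `v` to `w`. -/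
inductive PC : G.V → List G.A → G.V → Prop
  | nil (v : G.V) : PC v [] v
  | cons {v w : G.V} {a : G.A} {l : List G.A} (h : G.src a = v) (h2 : PC (G.rng a) l w) :
      PC v (a :: l) w

/-- The conformal weight of a finite path. -/
noncomputable def wgt (F : G.A → ℝ) (β : ℝ) (l : List G.A) : ℝ≥0∞ :=
  ee (-(β * (l.map F).sum))

lemma wgt_nil (F : G.A → ℝ) (β : ℝ) : wgt F β ([] : List G.A) = 1 := by
  simp [wgt, ee_zero]

lemma wgt_ne_zero (F : G.A → ℝ) (β : ℝ) (l : List G.A) : wgt F β l ≠ 0 := ee_ne_zero _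

lemma wgt_cons (F : G.A → ℝ) (β : ℝ) (a : G.A) (l : List G.A) :
    wgt F β (a :: l) = ee (-(β * F a)) * wgt F β l := by
  rw [wgt, wgt, ee_mul]
  congr 1
  simp only [List.map_cons, List.sum_cons]
  ring

lemma wgt_append (F : G.A → ℝ) (β : ℝ) (l1 l2 : List G.A) :
    wgt F β (l1 ++ l2) = wgt F β l1 * wgt F β l2 := by
  rw [wgt, wgt, wgt, ee_mul]
  congr 1
  simp only [List.map_append, List.sum_append]
  ring

lemma meas_coord (i : ℕ) : Measurable fun p : G.PathSpace => p.1 i :=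
  (measurable_pi_apply i).comp measurable_subtype_coe

lemma measSet_coord (i : ℕ) (s : Set G.A) : MeasurableSet {p : G.PathSpace | p.1 i ∈ s} :=
  meas_coord i (MeasurableSpace.measurableSet_top (s := s))

lemma meas_ZA (a : G.A) : MeasurableSet (ZA a : Set G.PathSpace) :=
  measSet_coord 0 {a}

lemma measSet_vert (i : ℕ) (v : G.V) : MeasurableSet {p : G.PathSpace | G.src (p.1 i) = v} :=
  measSet_coord i {b | G.src b = v}

lemma meas_cylV (v : G.V) : MeasurableSet (cylV G v) := measSet_vert 0 v

lemma meas_Zl (v : G.V) (l : List G.A) : MeasurableSet (Zl v l) := by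
  have h : Zl v l = {p : G.PathSpace | G.src (p.1 0) = v} ∩
      ⋂ i : Fin l.length, (fun p : G.PathSpace => p.1 i.1) ⁻¹' {l[i.1]'i.2} := by
    ext p
    simp only [Zl, Set.mem_inter_iff, Set.mem_setOf_eq, Set.mem_iInter, Set.mem_preimage,
      Set.mem_singleton_iff]
    exact ⟨fun ⟨h1, h2⟩ => ⟨h1, fun i => h2 i.1 i.2⟩, fun ⟨h1, h2⟩ => ⟨h1, fun i hi => h2 ⟨i, hi⟩⟩⟩
  rw [h]
  exact (measSet_vert 0 v).inter (MeasurableSet.iInter fun i =>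
    meas_coord i.1 (MeasurableSpace.measurableSet_top (s := {l[i.1]'i.2})))

lemma meas_shift : Measurable (shift : G.PathSpace → G.PathSpace) :=
  Measurable.subtype_mk (measurable_pi_lambda _ fun i => meas_coord (i + 1))

lemma meas_iter (n : ℕ) : Measurable (shift^[n] : G.PathSpace → G.PathSpace) := by
  induction n with
  | zero => exact measurable_id
  | succ n ih => rw [Function.iterate_succ]; exact ih.comp meas_shift

lemma iter_coord : ∀ (n : ℕ) (p : G.PathSpace) (i : ℕ), (shift^[n] p).1 i = p.1 (i + n)
  | 0, _, _ => rfl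
  | (n+1), p, i => by
      rw [Function.iterate_succ_apply, iter_coord n (shift p) i]
      rfl

lemma Zl_nil (v : G.V) : Zl v ([] : List G.A) = cylV G v := by
  ext p; simp [Zl, cylV]

lemma Zl_subset_cylV (v : G.V) (l : List G.A) : Zl v l ⊆ cylV G v := fun _ hp => hp.1

lemma Zl_cons {a : G.A} {l : List G.A} {v : G.V} (hv : G.src a = v) :
    Zl v (a :: l) = ZA a ∩ shift ⁻¹' (Zl (G.rng a) l) := by
  ext p
  simp only [Zl, ZA, Set.mem_inter_iff, Set.mem_setOf_eq, Set.mem_preimage]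
  constructor
  · rintro ⟨h1, h2⟩
    have h0 : p.1 0 = a := h2 0 (Nat.succ_pos _)
    refine ⟨h0, ?_, ?_⟩
    · show G.src ((shift p).1 0) = G.rng a
      rw [show (shift p).1 0 = p.1 1 from rfl, ← p.2 0, h0]
    · intro i hi
      show p.1 (i + 1) = l[i]'hi
      have h3 := h2 (i + 1) (by simpa using Nat.succ_lt_succ hi)
      simpa using h3
  · rintro ⟨h0, hs, hrest⟩
    refine ⟨by rw [h0, hv], ?_⟩
    intro i hi
    cases i with
    | zero => simpa using h0
    | succ n =>
      have hn : n < l.length := by simpa using hi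
      have h3 := hrest n hn
      simpa [shift] using h3

variable {F : G.A → ℝ} {β : ℝ} {m : MeasureTheory.Measure G.PathSpace}

lemma shift_image (a : G.A) (C : Set G.PathSpace) :
    shift '' ((shift ⁻¹' C) ∩ ZA a) = C ∩ cylV G (G.rng a) := by
  apply Set.Subset.antisymm
  · rintro q ⟨p, ⟨hC, ha⟩, rfl⟩
    refine ⟨hC, ?_⟩
    show G.src ((shift p).1 0) = G.rng a
    rw [show (shift p).1 0 = p.1 1 from rfl, ← p.2 0, ha]
  · rintro q ⟨hC, hq⟩
    have hq' : G.src (q.1 0) = G.rng a := hq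
    have hchain : ∀ i : ℕ, G.rng ((fun j => Nat.casesOn j a fun n => q.1 n) i) =
        G.src ((fun j => Nat.casesOn j a fun n => q.1 n) (i + 1)) := by
      intro i
      cases i with
      | zero => exact hq'.symm
      | succ n => exact q.2 n
    set pp : G.PathSpace := ⟨fun j => Nat.casesOn j a fun n => q.1 n, hchain⟩ with hpp
    have hsq : shift pp = q := Subtype.ext (funext fun i => rfl)
    refine ⟨pp, ⟨?_, ?_⟩, hsq⟩
    · show shift pp ∈ C
      rw [hsq]; exact hC
    · show pp.1 0 = a
      rfl

lemma conf1 (hm : IsConformal G F β m) (a : G.A) {C : Set G.PathSpace} (hC : MeasurableSet C) :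
    m (shift ⁻¹' C ∩ ZA a) = ee (-(β * F a)) * m (C ∩ cylV G (G.rng a)) := by
  have h := hm.conformal a (shift ⁻¹' C) (meas_shift hC)
  rw [show ({p : G.PathSpace | p.1 0 = a}) = ZA a from rfl, shift_image] at h
  rw [h, show ENNReal.ofReal (Real.exp (β * F a)) = ee (β * F a) from rfl, ee_cancel]

lemma measure_pre_Zl (hm : IsConformal G F β m) {v : G.V} {l : List G.A} {w : G.V}
    (h : PC v l w) : ∀ {C : Set G.PathSpace}, MeasurableSet C →
      m ((shift^[l.length]) ⁻¹' C ∩ Zl v l) = wgt F β l * m (C ∩ cylV G w) := by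
  induction h with
  | nil v =>
      intro C hC
      simp [Zl_nil, wgt_nil]
  | cons hsrc h2 ih =>
      rename_i v' w' a l'
      intro C hC
      rw [Zl_cons hsrc, List.length_cons, Function.iterate_succ, Set.preimage_comp]
      have hset : shift ⁻¹' ((shift^[l'.length]) ⁻¹' C) ∩ (ZA a ∩ shift ⁻¹' (Zl (G.rng a) l'))
          = shift ⁻¹' ((shift^[l'.length]) ⁻¹' C ∩ Zl (G.rng a) l') ∩ ZA a := by
        rw [Set.preimage_inter]
        ext p
        simp only [Set.mem_inter_iff]
        tauto
      rw [hset, conf1 hm a (((meas_iter l'.length) hC).inter (meas_Zl _ _))]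
      have hsub : ((shift^[l'.length]) ⁻¹' C ∩ Zl (G.rng a) l') ∩ cylV G (G.rng a)
          = (shift^[l'.length]) ⁻¹' C ∩ Zl (G.rng a) l' :=
        Set.inter_eq_left.mpr fun p hp => hp.2.1
      rw [hsub, ih hC, wgt_cons, mul_assoc]

lemma measure_Zl (hm : IsConformal G F β m) {v : G.V} {l : List G.A} {w : G.V} (h : PC v l w) :
    m (Zl v l) = wgt F β l * m (cylV G w) := by
  have h2 := measure_pre_Zl hm h MeasurableSet.univ
  simpa using h2

lemma null_pre (hm : IsConformal G F β m) {C : Set G.PathSpace} (hC : MeasurableSet C)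
    (h0 : m C = 0) : m (shift ⁻¹' C) = 0 := by
  have hcov : shift ⁻¹' C = ⋃ a : G.A, shift ⁻¹' C ∩ ZA a := by
    ext p
    simp only [Set.mem_iUnion, Set.mem_inter_iff, ZA, Set.mem_setOf_eq]
    exact ⟨fun h => ⟨p.1 0, h, rfl⟩, fun ⟨a, h, _⟩ => h⟩
  rw [hcov]
  refine MeasureTheory.measure_iUnion_null fun a => ?_
  rw [conf1 hm a hC]
  have h1 : m (C ∩ cylV G (G.rng a)) = 0 :=
    le_antisymm (le_trans (MeasureTheory.measure_mono Set.inter_subset_left) h0.le) zero_le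
  rw [h1, mul_zero]

lemma null_pre_iter (hm : IsConformal G F β m) {C : Set G.PathSpace} (hC : MeasurableSet C)
    (h0 : m C = 0) (n : ℕ) : m ((shift^[n]) ⁻¹' C) = 0 := by
  induction n with
  | zero => simpa using h0
  | succ n ih =>
      rw [Function.iterate_succ, Set.preimage_comp]
      exact null_pre hm ((meas_iter n) hC) ih

lemma PC_append {u v w : G.V} {l1 : List G.A} (h1 : PC u l1 v) :
    ∀ {l2 : List G.A}, PC v l2 w → PC u (l1 ++ l2) w := by
  induction h1 with
  | nil _ => intro l2 h2; simpa using h2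
  | cons h _ ih => intro l2 h2; exact PC.cons h (ih h2)

lemma PC_split : ∀ (t : List G.A) {v w : G.V} {s : List G.A}, PC v (t ++ s) w →
    ∃ u, PC v t u ∧ PC u s w
  | [], v, _, _, h => ⟨v, PC.nil v, h⟩
  | (a :: t), v, w, s, h => by
      cases h with
      | cons ha h2 =>
          obtain ⟨u, hu1, hu2⟩ := PC_split t h2
          exact ⟨u, PC.cons ha hu1, hu2⟩

/-- Last vertex of a list-path. -/
def lastD (v : G.V) (l : List G.A) : G.V := l.getLast?.elim v G.rng

lemma lastD_cons (v : G.V) (a : G.A) (l : List G.A) :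
    lastD v (a :: l) = lastD (G.rng a) l := by
  cases l with
  | nil => simp [lastD]
  | cons b l' =>
      rw [lastD, lastD, List.getLast?_cons_cons]
      cases hgl : (b :: l').getLast? with
      | none => simp at hgl
      | some x => rfl

lemma PC_frng {v w : G.V} {l : List G.A} (h : PC v l w) : lastD v l = w := by
  induction h with
  | nil v => rfl
  | cons hsrc h2 ih => rw [lastD_cons, ih]

lemma PC_head {v w : G.V} {l : List G.A} (h : PC v l w) : ∀ a ∈ l.head?, G.src a = v := by
  cases h with
  | nil => simp
  | cons hsrc h2 =>
      intro b hb
      simp only [List.head?_cons, Option.mem_def, Option.some.injEq] at hb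
      rw [← hb]; exact hsrc

lemma PC_chain {v w : G.V} {l : List G.A} (h : PC v l w) :
    l.Chain' fun a b => G.rng a = G.src b := by
  induction h with
  | nil => exact List.IsChain.nil
  | cons hsrc h2 ih =>
      exact List.isChain_cons.mpr ⟨fun b hb => (PC_head h2 b hb).symm, ih⟩

lemma PC_of_chain : ∀ (l : List G.A) (v : G.V), (∀ a ∈ l.head?, G.src a = v) →
    (l.Chain' fun a b => G.rng a = G.src b) → PC v l (lastD v l)
  | [], v, _, _ => PC.nil v
  | (a :: l), v, h1, h2 => by
      rw [lastD_cons]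
      have hc := List.isChain_cons.mp h2
      exact PC.cons (h1 a (by simp)) (PC_of_chain l (G.rng a) (fun b hb => (hc.1 b hb).symm) hc.2)

lemma PC_of_finpath (μ : FinPath G) : PC μ.base μ.arrows μ.frng := by
  have h := PC_of_chain μ.arrows μ.base μ.head_src μ.chain
  have h2 : lastD μ.base μ.arrows = μ.frng := rfl
  rwa [h2] at h

lemma PC_ofFn : ∀ (j : ℕ) (p : G.PathSpace),
    PC (G.src (p.1 0)) (List.ofFn fun i : Fin j => p.1 i) (G.src (p.1 j))
  | 0, p => by simpa using PC.nil (G.src (p.1 0))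
  | (j+1), p => by
      rw [List.ofFn_succ]
      refine PC.cons rfl ?_
      have h := PC_ofFn j (shift p)
      have h0 : G.src ((shift p).1 0) = G.rng (p.1 0) := by
        rw [show (shift p).1 0 = p.1 1 from rfl, ← p.2 0]
      rw [h0] at h
      exact h

/-- Paths visiting `v` infinitely often. -/
def visits (v : G.V) : Set G.PathSpace := {p : G.PathSpace | {i : ℕ | G.src (p.1 i) = v}.Infinite}

/-- Paths never using the arrow `a`. -/
def avoids (a : G.A) : Set G.PathSpace := ⋂ i : ℕ, {p : G.PathSpace | p.1 i = a}ᶜ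

lemma mem_avoids {a : G.A} {p : G.PathSpace} : p ∈ avoids a ↔ ∀ i, p.1 i ≠ a := by
  simp [avoids]

lemma meas_avoids (a : G.A) : MeasurableSet (avoids a) :=
  MeasurableSet.iInter fun i => (measSet_coord i {a}).compl

/-- Paths starting at `v` and never coming back to `v`. -/
def noret (v : G.V) : Set G.PathSpace :=
  cylV G v ∩ ⋂ i : ℕ, ⋂ (_ : 1 ≤ i), {p : G.PathSpace | G.src (p.1 i) = v}ᶜ

lemma mem_noret {v : G.V} {p : G.PathSpace} :
    p ∈ noret v ↔ G.src (p.1 0) = v ∧ ∀ i, 1 ≤ i → G.src (p.1 i) ≠ v := by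
  simp [noret, cylV, Set.mem_iInter]

lemma meas_noret (v : G.V) : MeasurableSet (noret v) :=
  (meas_cylV v).inter (MeasurableSet.iInter fun i => MeasurableSet.iInter fun _ =>
    (measSet_vert i v).compl)

lemma meas_visits (v : G.V) : MeasurableSet (visits v) := by
  have h : visits v = ⋂ n : ℕ, ⋃ i : ℕ, ⋃ (_ : n ≤ i), {p : G.PathSpace | G.src (p.1 i) = v} := by
    ext p
    simp only [visits, Set.mem_setOf_eq, Set.mem_iInter, Set.mem_iUnion]
    constructor
    · intro hinf n
      obtain ⟨i, hi, hni⟩ := hinf.exists_gt n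
      exact ⟨i, hni.le, hi⟩
    · intro h
      apply Set.infinite_of_forall_exists_gt
      intro n
      obtain ⟨i, hni, hi⟩ := h (n + 1)
      exact ⟨i, hi, by omega⟩
  rw [h]
  exact MeasurableSet.iInter fun n => MeasurableSet.iUnion fun i =>
    MeasurableSet.iUnion fun _ => measSet_vert i v

lemma visits_shift {v : G.V} {p : G.PathSpace} (hp : p ∈ visits v) (n : ℕ) :
    shift^[n] p ∈ visits v := by
  have hinf : ({i : ℕ | G.src (p.1 i) = v} \ Set.Iio n).Infinite := hp.diff (Set.finite_Iio n)
  have hinj : Set.InjOn (fun i => i - n) ({i : ℕ | G.src (p.1 i) = v} \ Set.Iio n) := by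
    intro i hi j hj hij
    simp only [Set.mem_diff, Set.mem_Iio, not_lt] at hi hj
    have hij' : i - n = j - n := hij
    omega
  have himg := (Set.infinite_image_iff hinj).mpr hinf
  refine Set.Infinite.mono ?_ himg
  rintro x ⟨i, hi, rfl⟩
  simp only [Set.mem_diff, Set.mem_Iio, not_lt, Set.mem_setOf_eq] at hi
  obtain ⟨hi1, hi2⟩ := hi
  show G.src ((shift^[n] p).1 (i - n)) = v
  rw [iter_coord, show i - n + n = i from by omega]
  exact hi1

lemma mem_NW_of_visits {p : G.PathSpace} {v : G.V} {i j : ℕ} (hij : i < j)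
    (hi : G.src (p.1 i) = v) (hj : G.src (p.1 j) = v) : v ∈ NW G := by
  have hpc := PC_ofFn (j - i) (shift^[i] p)
  rw [iter_coord, iter_coord, Nat.zero_add, show j - i + i = j from by omega, hi, hj] at hpc
  refine ⟨⟨v, List.ofFn fun k : Fin (j - i) => (shift^[i] p).1 k, PC_head hpc, PC_chain hpc⟩,
    ?_, rfl, ?_⟩
  · show 0 < (List.ofFn fun k : Fin (j - i) => (shift^[i] p).1 k).length
    simp only [List.length_ofFn]
    omega
  · exact PC_frng hpc

lemma reach_of_NW (hcof : Cofinal G) {v : G.V} (hv : v ∈ NW G) (w : G.V) :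
    ∃ l, PC w l v := by
  by_contra hcon
  set H : Set G.V := {u | ¬ ∃ l, PC u l v} with hH
  have hne : H.Nonempty := ⟨w, hcon⟩
  have hher : Hereditary G H := by
    intro a ha
    simp only [hH, Set.mem_setOf_eq] at ha ⊢
    rintro ⟨l, hl⟩
    exact ha ⟨a :: l, PC.cons rfl hl⟩
  have hsat : Saturated G H := by
    intro u _ hsucc
    simp only [hH, Set.mem_setOf_eq]
    rintro ⟨l, hl⟩
    cases hl with
    | nil =>
        obtain ⟨μ, hlen, hsrc, hfrng⟩ := hv
        have hb : μ.base = v := hsrc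
        have hpc : PC v μ.arrows v := by
          have h := PC_of_finpath μ
          rwa [hb, hfrng] at h
        cases harr : μ.arrows with
        | nil =>
            have : 0 < μ.arrows.length := hlen
            rw [harr] at this
            simp at this
        | cons a l' =>
            rw [harr] at hpc
            cases hpc with
            | cons hsa hrest =>
                have := hsucc a hsa
                simp only [hH, Set.mem_setOf_eq] at this
                exact this ⟨l', hrest⟩
    | cons hsa hrest =>
        have := hsucc _ hsa
        simp only [hH, Set.mem_setOf_eq] at this
        exact this ⟨_, hrest⟩
  have huniv := hcof H hne hher hsat
  have hvH : v ∈ H := huniv ▸ Set.mem_univ v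
  exact hvH ⟨[], PC.nil v⟩

lemma first_split {a : G.A} : ∀ {ρ : List G.A}, a ∈ ρ → ∃ t u, ρ = t ++ a :: u ∧ a ∉ t := by
  intro ρ h
  induction ρ with
  | nil => simp at h
  | cons b ρ' ih =>
      by_cases hb : b = a
      · exact ⟨[], ρ', by rw [hb, List.nil_append], by simp⟩
      · have h' : a ∈ ρ' := by
          rcases List.mem_cons.mp h with h1 | h1
          · exact absurd h1.symm hb
          · exact h1
        obtain ⟨t, u, h1, h2⟩ := ih h'
        refine ⟨b :: t, u, by rw [List.cons_append, h1], ?_⟩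
        simp only [List.mem_cons, not_or]
        exact ⟨fun hh => hb hh.symm, h2⟩

lemma tsum_fiber (S : Set (List G.A)) (wf : List G.A → ℝ≥0∞) :
    ∑' l : S, wf l.1 = ∑' j : ℕ, ∑' l : {l : S // l.1.length = j}, wf l.1.1 := by
  rw [← Equiv.tsum_eq (Equiv.sigmaFiberEquiv fun l : S => l.1.length) (fun l : S => wf l.1)]
  exact ENNReal.tsum_sigma' _

lemma tail_le (S : Set (List G.A)) (wf : List G.A → ℝ≥0∞) (n : ℕ) :
    ∑' l : {l : S // n ≤ l.1.length}, wf l.1.1 ≤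
      ∑' k : ℕ, ∑' l : {l : S // l.1.length = k + n}, wf l.1.1 := by
  have hinj : Function.Injective (fun l : {l : S // n ≤ l.1.length} =>
      (⟨l.1.1.length - n, ⟨l.1, by omega⟩⟩ : Σ k, {l : S // l.1.length = k + n})) := by
    intro x y hxy
    have h3 : (x.1.1 : List G.A) = y.1.1 :=
      congrArg (fun p : (Σ k, {l : S // l.1.length = k + n}) => (p.2.1.1 : List G.A)) hxy
    exact Subtype.ext (Subtype.ext h3)
  refine le_trans (ENNReal.tsum_comp_le_tsum_of_injective hinj
    (fun p : (Σ k, {l : S // l.1.length = k + n}) => wf p.2.1.1)) ?_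
  exact le_of_eq (ENNReal.tsum_sigma' _)

lemma bc_null (hm : IsConformal G F β m) {S : Set (List G.A)} {X : Set G.PathSpace} {v : G.V}
    (hmZ : ∀ l : S, m (Zl v l.1) ≤ wgt F β l.1 * m (cylV G v))
    (hT : ∑' l : S, wgt F β l.1 ≠ ∞) (hfin : m (cylV G v) ≠ ∞)
    (hcov : ∀ n : ℕ, X ⊆ ⋃ l : {l : S // n ≤ l.1.length}, Zl v l.1.1) :
    m X = 0 := by
  set f : ℕ → ℝ≥0∞ := fun j => ∑' l : {l : S // l.1.length = j}, wgt F β l.1.1 with hf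
  have htot : ∑' j, f j ≠ ∞ := by
    simp only [hf]
    rw [← tsum_fiber S (wgt F β)]
    exact hT
  have hbound : ∀ n, m X ≤ (∑' k, f (k + n)) * m (cylV G v) := by
    intro n
    calc m X ≤ m (⋃ l : {l : S // n ≤ l.1.length}, Zl v l.1.1) :=
          MeasureTheory.measure_mono (hcov n)
    _ ≤ ∑' l : {l : S // n ≤ l.1.length}, m (Zl v l.1.1) := MeasureTheory.measure_iUnion_le _
    _ ≤ ∑' l : {l : S // n ≤ l.1.length}, wgt F β l.1.1 * m (cylV G v) :=
          ENNReal.tsum_le_tsum fun l => hmZ l.1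
    _ = (∑' l : {l : S // n ≤ l.1.length}, wgt F β l.1.1) * m (cylV G v) :=
          ENNReal.tsum_mul_right
    _ ≤ (∑' k, ∑' l : {l : S // l.1.length = k + n}, wgt F β l.1.1) * m (cylV G v) :=
          mul_le_mul_left (tail_le S (wgt F β) n) _
    _ = (∑' k, f (k + n)) * m (cylV G v) := rfl
  have htends : Tendsto (fun n => (∑' k, f (k + n)) * m (cylV G v)) atTop (𝓝 0) := by
    have h1 := ENNReal.tendsto_sum_nat_add f htot
    have h2 := ENNReal.Tendsto.mul_const h1 (Or.inr hfin)
    simpa using h2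
  have hle : m X ≤ 0 := ge_of_tendsto' htends hbound
  exact le_antisymm hle zero_le

lemma disj_bound {S : Set (List G.A)} {v : G.V} {c : ℝ≥0∞} (D : S → Set G.PathSpace)
    (hD : ∀ l, MeasurableSet (D l)) (hsub : ∀ l, D l ⊆ cylV G v)
    (hdisj : Pairwise (Function.onFun Disjoint D))
    (hval : ∀ l : S, m (D l) = wgt F β l.1 * c) :
    (∑' l : S, wgt F β l.1) * c ≤ m (cylV G v) := by
  calc (∑' l : S, wgt F β l.1) * c = ∑' l : S, wgt F β l.1 * c := ENNReal.tsum_mul_right.symm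
  _ = ∑' l : S, m (D l) := tsum_congr fun l => (hval l).symm
  _ = m (⋃ l, D l) := (MeasureTheory.measure_iUnion hdisj hD).symm
  _ ≤ m (cylV G v) := MeasureTheory.measure_mono (Set.iUnion_subset hsub)

lemma PC_ofFn' {v : G.V} {p : G.PathSpace} (h0 : G.src (p.1 0) = v) {j : ℕ}
    (hj : G.src (p.1 j) = v) : PC v (List.ofFn fun i : Fin j => p.1 i) v := by
  have h := PC_ofFn j p
  rwa [h0, hj] at h

lemma cover_visits {v : G.V} {S : Set (List G.A)} {X : Set G.PathSpace}
    (hX : ∀ p ∈ X, p ∈ visits v ∧ G.src (p.1 0) = v)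
    (hmem : ∀ p ∈ X, ∀ j : ℕ, G.src (p.1 j) = v → (List.ofFn fun i : Fin j => p.1 i) ∈ S)
    (n : ℕ) : X ⊆ ⋃ l : {l : S // n ≤ l.1.length}, Zl v l.1.1 := by
  intro p hp
  obtain ⟨hinf, hcyl⟩ := hX p hp
  obtain ⟨j, hj, hnj⟩ := hinf.exists_gt n
  refine Set.mem_iUnion.mpr ⟨⟨⟨_, hmem p hp j hj⟩, by simp only [List.length_ofFn]; omega⟩,
    hcyl, ?_⟩
  intro i hi
  simp only [List.getElem_ofFn]

lemma Zl_inj {v : G.V} {l1 l2 : List G.A} (h : l1.length = l2.length) {p : G.PathSpace}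
    (h1 : p ∈ Zl v l1) (h2 : p ∈ Zl v l2) : l1 = l2 :=
  List.ext_getElem h fun i hi1 hi2 => by rw [← h1.2 i hi1, ← h2.2 i hi2]

lemma noret_key {v : G.V} {n1 n2 : ℕ} (h : n1 < n2) {p : G.PathSpace}
    (h1 : shift^[n1] p ∈ noret v) (h2 : shift^[n2] p ∈ noret v) : False := by
  rw [mem_noret] at h1 h2
  have ha := h1.2 (n2 - n1) (by omega)
  rw [iter_coord, show n2 - n1 + n1 = n2 from by omega] at ha
  have hb := h2.1
  rw [iter_coord, Nat.zero_add] at hb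
  exact ha hb

lemma append_disj {v : G.V} {a : G.A} {t : List G.A} (hν : a ∉ t)
    {l1 l2 : List G.A} (h2a : ∀ x ∈ l2, x ≠ a) (hlt : l1.length < l2.length)
    {p : G.PathSpace} (hp1 : p ∈ Zl v ((l1 ++ t) ++ [a])) (hp2 : p ∈ Zl v ((l2 ++ t) ++ [a])) :
    False := by
  have hL1 : (l1 ++ t).length = l1.length + t.length := List.length_append
  have hL2 : (l2 ++ t).length = l2.length + t.length := List.length_append
  have hF1 : ((l1 ++ t) ++ [a]).length = (l1 ++ t).length + 1 := by
    rw [List.length_append]; rfl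
  have hF2 : ((l2 ++ t) ++ [a]).length = (l2 ++ t).length + 1 := by
    rw [List.length_append]; rfl
  have e1 : p.1 ((l1 ++ t).length) = a := by
    have h := hp1.2 ((l1 ++ t).length) (by omega)
    rwa [List.getElem_concat_length rfl] at h
  have h := hp2.2 ((l1 ++ t).length) (by omega)
  rw [e1] at h
  rw [List.getElem_append_left (by omega)] at h
  by_cases hcase : (l1 ++ t).length < l2.length
  · rw [List.getElem_append_left hcase] at h
    exact h2a _ (List.getElem_mem hcase) h.symm
  · rw [List.getElem_append_right (by omega)] at h
    refine hν ?_
    rw [h]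
    exact List.getElem_mem (by omega)

end Aux

open CDG in
/-- for a cofinal graph with `NW_G ≠ ∅`, every `e^{βF}`-conformal measure
is concentrated either on `P(G)_rec` or on `P(G)_wan`. -/
theorem stmt8 (G : CDG) (hcof : Cofinal G) (hne : (NW G).Nonempty)
    (F : G.A → ℝ) (β : ℝ) (m : MeasureTheory.Measure G.PathSpace)
    (hm : IsConformal G F β m) :
    m (recSet G)ᶜ = 0 ∨ m (wanSet G)ᶜ = 0 := by
  classical
  by_cases hwan : m (wanSet G)ᶜ = 0
  · exact Or.inr hwan
  left
  -- there is a vertex visited infinitely often with positive measure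
  have hwandec : (wanSet G)ᶜ ⊆ ⋃ v : G.V, visits v := by
    intro p hp
    rw [Set.mem_compl_iff, wanSet, Set.mem_setOf_eq, not_forall] at hp
    obtain ⟨v, hv⟩ := hp
    exact Set.mem_iUnion.mpr ⟨v, hv⟩
  have hex : ∃ v : G.V, m (visits v) ≠ 0 := by
    by_contra h
    push_neg at h
    exact hwan (MeasureTheory.measure_mono_null hwandec
      (MeasureTheory.measure_iUnion_null fun v => h v))
  obtain ⟨v, hv0⟩ := hex
  -- v is non-wandering
  have hvNW : v ∈ NW G := by
    have hne' : (visits v).Nonempty := by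
      by_contra h
      rw [Set.not_nonempty_iff_eq_empty] at h
      exact hv0 (by rw [h, MeasureTheory.measure_empty])
    obtain ⟨p, hp⟩ := hne'
    obtain ⟨i, hi⟩ := hp.nonempty
    obtain ⟨j, hj, hij⟩ := hp.exists_gt i
    exact mem_NW_of_visits hij hi hj
  have hreach : ∀ w, ∃ l, PC w l v := reach_of_NW hcof hvNW
  have hfin : ∀ u, m (cylV G u) ≠ ∞ := fun u => (hm.vert_fin u).ne
  -- m (cylV v) ≠ 0
  have hcylv : m (cylV G v) ≠ 0 := by
    intro h0
    apply hv0
    have hsub : visits v ⊆ ⋃ n : ℕ, (shift^[n]) ⁻¹' (cylV G v) := by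
      intro p hp
      obtain ⟨i, hi⟩ := hp.nonempty
      refine Set.mem_iUnion.mpr ⟨i, ?_⟩
      show G.src ((shift^[i] p).1 0) = v
      rw [iter_coord, Nat.zero_add]
      exact hi
    exact MeasureTheory.measure_mono_null hsub
      (MeasureTheory.measure_iUnion_null fun n => null_pre_iter hm (meas_cylV v) h0 n)
  -- positivity of all vertex cylinders
  have hpos : ∀ u, m (cylV G u) ≠ 0 := by
    intro u h0
    obtain ⟨l, hl⟩ := hreach u
    have hz := measure_Zl hm hl
    have h1 : m (Zl u l) = 0 :=
      MeasureTheory.measure_mono_null (Zl_subset_cylV u l) h0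
    rw [hz] at h1
    rcases mul_eq_zero.mp h1 with h | h
    · exact wgt_ne_zero F β l h
    · exact hcylv h
  -- m (visits v ∩ cylV v) ≠ 0
  have hvisC : m (visits v ∩ cylV G v) ≠ 0 := by
    intro h0
    apply hv0
    have hsub : visits v ⊆ ⋃ n : ℕ, (shift^[n]) ⁻¹' (visits v ∩ cylV G v) := by
      intro p hp
      obtain ⟨i, hi⟩ := hp.nonempty
      refine Set.mem_iUnion.mpr ⟨i, visits_shift hp i, ?_⟩
      show G.src ((shift^[i] p).1 0) = v
      rw [iter_coord, Nat.zero_add]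
      exact hi
    exact MeasureTheory.measure_mono_null hsub
      (MeasureTheory.measure_iUnion_null fun n =>
        null_pre_iter hm ((meas_visits v).inter (meas_cylV v)) h0 n)
  -- the loop sum at v is infinite
  have hTinf : ∑' l : {l : List G.A | PC v l v}, wgt F β l.1 = ∞ := by
    by_contra hT
    apply hvisC
    refine bc_null hm (fun l => le_of_eq (measure_Zl hm l.2)) hT (hfin v) ?_
    intro n
    refine cover_visits (fun p hp => ⟨hp.1, hp.2⟩) ?_ n
    intro p hp j hj
    exact PC_ofFn' hp.2 hj
  -- no-return set is null
  have hnoret : m (noret v) = 0 := by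
    by_contra h0
    have hdisj : Pairwise (Function.onFun Disjoint
        (fun l : {l : List G.A | PC v l v} =>
          (shift^[l.1.length]) ⁻¹' (noret v) ∩ Zl v l.1)) := by
      intro l1 l2 hne12
      rw [Function.onFun, Set.disjoint_left]
      intro p hp1 hp2
      rcases Nat.lt_trichotomy l1.1.length l2.1.length with h | h | h
      · exact noret_key h hp1.1 hp2.1
      · exact hne12 (Subtype.ext (Zl_inj h hp1.2 hp2.2))
      · exact noret_key h hp2.1 hp1.1
    have hle := disj_bound (m := m) (F := F) (β := β) (c := m (noret v))
      (fun l : {l : List G.A | PC v l v} =>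
        (shift^[l.1.length]) ⁻¹' (noret v) ∩ Zl v l.1)
      (fun l => ((meas_iter l.1.length) (meas_noret v)).inter (meas_Zl v l.1))
      (fun l p hp => hp.2.1) hdisj ?_
    · rw [hTinf, ENNReal.top_mul h0] at hle
      exact hfin v (top_le_iff.mp hle)
    · intro l
      have h1 := measure_pre_Zl hm l.2 (meas_noret v)
      rwa [Set.inter_eq_left.mpr (fun p hp => hp.1 : noret v ⊆ cylV G v)] at h1
  -- the set of paths never visiting v is null (cofinality argument)
  set Nev : Set G.PathSpace := ⋂ i : ℕ, {p : G.PathSpace | G.src (p.1 i) = v}ᶜ with hNevdef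
  have measNev : MeasurableSet Nev :=
    MeasurableSet.iInter fun i => (measSet_vert i v).compl
  have hNevmem : ∀ p : G.PathSpace, p ∈ Nev ↔ ∀ i, G.src (p.1 i) ≠ v := by
    intro p; simp [hNevdef]
  have hH : ∀ u : G.V, m (Nev ∩ cylV G u) = 0 := by
    set H : Set G.V := {u | m (Nev ∩ cylV G u) = 0} with hHdef
    have hher : Hereditary G H := by
      intro b hb
      simp only [hHdef, Set.mem_setOf_eq] at hb ⊢
      have hconf := conf1 hm b measNev
      have hzero : m (shift ⁻¹' Nev ∩ ZA b) = 0 := by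
        by_cases hsb : G.src b = v
        · refine MeasureTheory.measure_mono_null ?_ hnoret
          rintro p ⟨hpN, hpa⟩
          rw [mem_noret]
          have hpa' : p.1 0 = b := hpa
          constructor
          · rw [hpa', hsb]
          · intro i hi
            have h2 := (hNevmem (shift p)).mp hpN (i - 1)
            rw [show (shift p).1 (i-1) = p.1 (i - 1 + 1) from rfl,
              show i - 1 + 1 = i from by omega] at h2
            exact h2
        · refine MeasureTheory.measure_mono_null ?_ hb
          rintro p ⟨hpN, hpa⟩
          have hpa' : p.1 0 = b := hpa
          refine ⟨?_, ?_⟩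
          · rw [hNevmem]
            intro i
            cases i with
            | zero => rw [hpa']; exact hsb
            | succ n => exact (hNevmem (shift p)).mp hpN n
          · show G.src (p.1 0) = G.src b
            rw [hpa']
      rw [hzero] at hconf
      rcases mul_eq_zero.mp hconf.symm with h | h
      · exact absurd h (ee_ne_zero _)
      · exact h
    have hsat : Saturated G H := by
      intro u _ hsucc
      simp only [hHdef, Set.mem_setOf_eq]
      have hcov2 : Nev ∩ cylV G u ⊆
          ⋃ b : {b : G.A // G.src b = u}, (shift ⁻¹' Nev ∩ ZA b.1) := by
        rintro p ⟨hpN, hpc⟩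
        refine Set.mem_iUnion.mpr ⟨⟨p.1 0, hpc⟩, ?_, rfl⟩
        rw [Set.mem_preimage, hNevmem]
        intro i
        exact (hNevmem p).mp hpN (i + 1)
      refine MeasureTheory.measure_mono_null hcov2
        (MeasureTheory.measure_iUnion_null fun b => ?_)
      rw [conf1 hm b.1 measNev]
      have h2 : m (Nev ∩ cylV G (G.rng b.1)) = 0 := hsucc b.1 b.2
      rw [h2, mul_zero]
    have hHne : H.Nonempty := by
      refine ⟨v, ?_⟩
      simp only [hHdef, Set.mem_setOf_eq]
      have hempty : Nev ∩ cylV G v = ∅ :=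
        Set.eq_empty_iff_forall_notMem.mpr fun p ⟨h1, h2⟩ => ((hNevmem p).mp h1 0) h2
      rw [hempty, MeasureTheory.measure_empty]
    have huniv := hcof H hHne hher hsat
    intro u
    have hu : u ∈ H := huniv ▸ Set.mem_univ u
    exact hu
  have hNev0 : m Nev = 0 := by
    have hsub : Nev ⊆ ⋃ u : G.V, Nev ∩ cylV G u :=
      fun p hp => Set.mem_iUnion.mpr ⟨G.src (p.1 0), hp, rfl⟩
    exact MeasureTheory.measure_mono_null hsub (MeasureTheory.measure_iUnion_null hH)
  -- a.e. path visits v infinitely often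
  have hIc : m (visits v)ᶜ = 0 := by
    have hsub : (visits v)ᶜ ⊆ Nev ∪ ⋃ n : ℕ, (shift^[n]) ⁻¹' (noret v) := by
      intro p hp
      rw [Set.mem_compl_iff, visits, Set.mem_setOf_eq, Set.not_infinite] at hp
      by_cases hne' : {i : ℕ | G.src (p.1 i) = v}.Nonempty
      · right
        obtain ⟨n, hn, hmax⟩ := Set.Finite.exists_maximalFor id _ hp hne'
        refine Set.mem_iUnion.mpr ⟨n, ?_⟩
        rw [Set.mem_preimage, mem_noret]
        constructor
        · rw [iter_coord, Nat.zero_add]; exact hn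
        · intro i hi hcon
          rw [iter_coord] at hcon
          have h2 := hmax hcon (by simp)
          simp only [id_eq] at h2
          omega
      · left
        rw [hNevmem]
        intro i hi
        exact hne' ⟨i, hi⟩
    refine MeasureTheory.measure_mono_null hsub
      (MeasureTheory.measure_union_null hNev0
        (MeasureTheory.measure_iUnion_null fun n => null_pre_iter hm (meas_noret v) hnoret n))
  -- every non-wandering arrow is a.e. used infinitely often
  have havoid : ∀ a : G.A, G.src a ∈ NW G → m (avoids a) = 0 := by
    intro a ha
    obtain ⟨l0, hl0⟩ := reach_of_NW hcof ha v
    have hρ : PC v (l0 ++ [a]) (G.rng a) := PC_append hl0 (PC.cons rfl (PC.nil _))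
    have hmem : a ∈ l0 ++ [a] := by simp
    obtain ⟨t, u, hsplit, hat⟩ := first_split hmem
    have hPCν : PC v (t ++ [a]) (G.rng a) := by
      rw [hsplit] at hρ
      obtain ⟨x, hx1, hx2⟩ := PC_split t hρ
      cases hx2 with
      | cons hxa hxr => exact PC_append hx1 (PC.cons hxa (PC.nil _))
    set S4 : Set (List G.A) := {l | PC v l v ∧ ∀ x ∈ l, x ≠ a} with hS4
    set c : ℝ≥0∞ := wgt F β (t ++ [a]) * m (cylV G (G.rng a)) with hc
    have hcne : c ≠ 0 := by
      rw [hc]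
      exact mul_ne_zero (wgt_ne_zero F β _) (hpos _)
    have hT4 : ∑' l : S4, wgt F β l.1 ≠ ∞ := by
      intro hTtop
      have hdisj : Pairwise (Function.onFun Disjoint
          (fun l : S4 => Zl v ((l.1 ++ t) ++ [a]))) := by
        intro l1 l2 hne12
        rw [Function.onFun, Set.disjoint_left]
        intro p hp1 hp2
        rcases Nat.lt_trichotomy l1.1.length l2.1.length with h | h | h
        · exact append_disj hat l2.2.2 h hp1 hp2
        · refine hne12 (Subtype.ext ?_)
          have hfull : (l1.1 ++ t) ++ [a] = (l2.1 ++ t) ++ [a] :=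
            Zl_inj (by simp [h]) hp1 hp2
          exact List.append_cancel_right (List.append_cancel_right hfull)
        · exact append_disj hat l1.2.2 h hp2 hp1
      have hle := disj_bound (m := m) (F := F) (β := β) (c := c) (fun l : S4 => Zl v ((l.1 ++ t) ++ [a]))
        (fun l => meas_Zl _ _) (fun l p hp => hp.1) hdisj ?_
      · rw [hTtop, ENNReal.top_mul hcne] at hle
        exact hfin v (top_le_iff.mp hle)
      · intro l
        have hPCl : PC v ((l.1 ++ t) ++ [a]) (G.rng a) := by
          rw [List.append_assoc]; exact PC_append l.2.1 hPCν
        have h1 := measure_Zl hm hPCl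
        rw [h1, List.append_assoc, wgt_append, hc, mul_assoc]
    have hE0 : m (avoids a ∩ (visits v ∩ cylV G v)) = 0 := by
      refine bc_null hm (fun l => le_of_eq (measure_Zl hm l.2.1)) hT4 (hfin v) ?_
      intro n
      refine cover_visits (fun p hp => ⟨hp.2.1, hp.2.2⟩) ?_ n
      intro p hp j hj
      refine ⟨PC_ofFn' hp.2.2 hj, ?_⟩
      intro x hx
      rw [List.mem_ofFn] at hx
      obtain ⟨i, rfl⟩ := hx
      exact (mem_avoids.mp hp.1) i
    have hsub : avoids a ⊆ (visits v)ᶜ ∪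
        ⋃ n : ℕ, (shift^[n]) ⁻¹' (avoids a ∩ (visits v ∩ cylV G v)) := by
      intro p hp
      by_cases hvis : p ∈ visits v
      · right
        obtain ⟨i, hi⟩ := hvis.nonempty
        refine Set.mem_iUnion.mpr ⟨i, ?_⟩
        rw [Set.mem_preimage]
        refine ⟨?_, visits_shift hvis i, ?_⟩
        · rw [mem_avoids]
          intro k
          rw [iter_coord]
          exact mem_avoids.mp hp (k + i)
        · show G.src ((shift^[i] p).1 0) = v
          rw [iter_coord, Nat.zero_add]
          exact hi
      · left; exact hvis
    exact MeasureTheory.measure_mono_null hsub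
      (MeasureTheory.measure_union_null hIc
        (MeasureTheory.measure_iUnion_null fun n => null_pre_iter hm
          ((meas_avoids a).inter ((meas_visits v).inter (meas_cylV v))) hE0 n))
  -- conclude
  have hrecdec : (recSet G)ᶜ ⊆ ⋃ a : {a : G.A // G.src a ∈ NW G}, ⋃ n : ℕ,
      (shift^[n]) ⁻¹' (avoids a.1) := by
    intro p hp
    rw [Set.mem_compl_iff, recSet, Set.mem_setOf_eq] at hp
    push_neg at hp
    obtain ⟨a, ha, n, hn⟩ := hp
    refine Set.mem_iUnion.mpr ⟨⟨a, ha⟩, Set.mem_iUnion.mpr ⟨n, ?_⟩⟩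
    rw [Set.mem_preimage, mem_avoids]
    intro i
    rw [iter_coord]
    exact hn (i + n) (by omega)
  exact MeasureTheory.measure_mono_null hrecdec
    (MeasureTheory.measure_iUnion_null fun a => MeasureTheory.measure_iUnion_null fun n =>
      null_pre_iter hm (meas_avoids a.1) (havoid a.1 a.2) n)
end

section
/- Let G be the countable directed graph with a single vertex v and arrows a_n, n ∈ ℕ, and let F be the potential F(a_n) = t_n for a sequence (t_n) of real numbers; let β ∈ ℝ. Then there exists an e^{βF}-conformal measure m on P(G) with m(P(G)) = 1 if and only if Σ_{n=1}^∞ e^{-β t_n} = 1, and in that case m is unique: it is the infinite product of the probability measure on the arrow set assigning mass e^{-β t_n} to a_n, i.e. m(Z(a_{n_1} a_{n_2} ⋯ a_{n_k})) = e^{-β(t_{n_1} + ⋯ + t_{n_k})} for every finite word. -/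
open MeasureTheory
open scoped ENNReal

/-- The graph of the Cuntz algebra `O_∞`: a single vertex and arrows indexed by `ℕ`. -/
def OinfGraph : CDG where
  V := Unit
  A := ℕ
  countV := inferInstance
  countA := inferInstance
  src := fun _ => ()
  rng := fun _ => ()

/-- The finite path in `OinfGraph` given by a finite word in the arrows. -/
def wordPath (w : List ℕ) : CDG.FinPath OinfGraph where
  base := ()
  arrows := w
  head_src := by intro a _; rfl
  chain := by
    refine List.isChain_iff_getElem.mpr ?_
    intro i h
    rfl

section Aux
open CDG

abbrev PS : Type := OinfGraph.PathSpace

/-- cylinder of a word -/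
def cylW (w : List ℕ) : Set PS := cyl (wordPath w)

lemma mem_cylW {w : List ℕ} {p : PS} :
    p ∈ cylW w ↔ ∀ i (h : i < w.length), p.1 i = w.get ⟨i, h⟩ := by
  constructor
  · rintro ⟨_, h2⟩ i h; exact h2 i h
  · intro h; exact ⟨rfl, h⟩

lemma cylW_nil : cylW [] = Set.univ := by
  ext p; simp [mem_cylW]

lemma meas_coord_s18 (i : ℕ) (n : ℕ) : MeasurableSet {p : PS | p.1 i = n} := by
  have h1 : Measurable (fun p : PS => p.1 i) :=
    (measurable_pi_apply i).comp measurable_subtype_coe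
  have h2 : {p : PS | p.1 i = n} = (fun p : PS => p.1 i) ⁻¹' {n} := rfl
  rw [h2]; exact h1 trivial

lemma meas_cylW (w : List ℕ) : MeasurableSet (cylW w) := by
  have : cylW w = ⋂ (i : Fin w.length), {p : PS | p.1 i.1 = w.get i} := by
    ext p
    simp only [mem_cylW, Set.mem_iInter, Set.mem_setOf_eq]
    exact ⟨fun h i => h i.1 i.2, fun h i hi => h ⟨i, hi⟩⟩
  rw [this]
  exact MeasurableSet.iInter fun i => meas_coord_s18 i.1 (w.get i)

end Aux
section Aux2
open CDG MeasurableSpace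

lemma gen_eq : (inferInstance : MeasurableSpace PS) =
    MeasurableSpace.generateFrom (Set.range cylW) := by
  apply le_antisymm
  · -- inst ≤ generateFrom
    have : (inferInstance : MeasurableSpace PS) =
        MeasurableSpace.comap (Subtype.val) (MeasurableSpace.pi) := rfl
    rw [this]
    rw [(MeasurableSpace.gc_comap_map (Subtype.val : PS → ℕ → ℕ)).le_iff_le]
    rw [MeasurableSpace.pi]
    apply iSup_le
    intro i
    rw [(MeasurableSpace.gc_comap_map (fun b : ℕ → OinfGraph.A => b i)).le_iff_le]
    intro s _
    show MeasurableSet[MeasurableSpace.generateFrom (Set.range cylW)]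
      (Subtype.val ⁻¹' ((fun b : ℕ → OinfGraph.A => b i) ⁻¹' s))
    -- the set val ⁻¹' (eval i ⁻¹' s) = {p : PS | p.1 i ∈ s}
    have hset : (Subtype.val ⁻¹' ((fun b : ℕ → OinfGraph.A => b i) ⁻¹' s) : Set PS) =
        ⋃ n ∈ s, ⋃ (v : {v : Fin (i+1) → ℕ // v ⟨i, Nat.lt_succ_self i⟩ = n}),
          cylW (List.ofFn v.1) := by
      ext p
      simp only [Set.mem_preimage, Function.eval, Set.mem_iUnion]
      constructor
      · intro hp
        refine ⟨p.1 i, hp, ⟨fun j => p.1 j.1, rfl⟩, ?_⟩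
        rw [mem_cylW]
        intro j hj
        simp only [List.get_eq_getElem, List.getElem_ofFn]
        exact (List.getElem_ofFn (f := fun k : Fin (i+1) => (p.1 k.1 : ℕ)) (i := j) hj).symm
      · rintro ⟨n, hn, ⟨v, hv⟩, hp⟩
        rw [mem_cylW] at hp
        have := hp i (by simp)
        simp only [List.get_eq_getElem, List.getElem_ofFn] at this
        rw [this]
        exact hv ▸ hn
    rw [hset]
    apply MeasurableSet.biUnion (Set.to_countable s)
    intro n _
    apply MeasurableSet.iUnion
    intro v
    exact measurableSet_generateFrom ⟨_, rfl⟩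
  · rw [MeasurableSpace.generateFrom_le_iff]
    rintro s ⟨w, rfl⟩
    exact meas_cylW w

lemma pisys : IsPiSystem (Set.range cylW) := by
  rintro _ ⟨w, rfl⟩ _ ⟨w', rfl⟩ ⟨p, hp, hp'⟩
  rw [mem_cylW] at hp hp'
  rcases le_total w.length w'.length with h | h
  · refine ⟨w', ?_⟩
    rw [Set.inter_eq_self_of_subset_right]
    intro q hq
    rw [mem_cylW] at hq ⊢
    intro i hi
    rw [hq i (lt_of_lt_of_le hi h)]
    rw [← hp' i (lt_of_lt_of_le hi h), hp i hi]
  · refine ⟨w, ?_⟩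
    rw [Set.inter_eq_self_of_subset_left]
    intro q hq
    rw [mem_cylW] at hq ⊢
    intro i hi
    rw [hq i (lt_of_lt_of_le hi h)]
    rw [← hp i (lt_of_lt_of_le hi h), hp' i hi]

lemma ext_meas (m m' : Measure PS) [IsFiniteMeasure m]
    (h : ∀ w, m (cylW w) = m' (cylW w)) : m = m' := by
  apply MeasureTheory.ext_of_generate_finite _ gen_eq pisys
  · rintro s ⟨w, rfl⟩; exact h w
  · rw [← cylW_nil]; exact h []

end Aux2
section Aux3
open CDG

noncomputable def E (x : ℝ) : ℝ≥0∞ := ENNReal.ofReal (Real.exp x)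

lemma E_ne_zero (x : ℝ) : E x ≠ 0 := by
  simp [E, ENNReal.ofReal_eq_zero, not_le, Real.exp_pos]

lemma E_ne_top (x : ℝ) : E x ≠ ⊤ := ENNReal.ofReal_ne_top

lemma E_add (x y : ℝ) : E (x + y) = E x * E y := by
  rw [E, E, E, Real.exp_add, ENNReal.ofReal_mul (Real.exp_nonneg x)]

lemma E_mul_E_neg (x : ℝ) : E x * E (-x) = 1 := by
  rw [← E_add, add_neg_cancel, E, Real.exp_zero, ENNReal.ofReal_one]

/-- prepend an arrow to a path -/
def prep (a : ℕ) (q : PS) : PS :=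
  ⟨fun i => Nat.casesOn i a (fun j => q.1 j), fun _ => rfl⟩

lemma prep_meas (a : ℕ) : Measurable (prep a) := by
  apply Measurable.subtype_mk
  apply measurable_pi_lambda
  intro i
  cases i with
  | zero => exact measurable_const
  | succ j => exact (measurable_pi_apply j).comp measurable_subtype_coe

lemma shift_prep (a : ℕ) (q : PS) : shift (prep a q) = q := by
  apply Subtype.ext; funext i; rfl

lemma prep_shift {a : ℕ} {p : PS} (h : p.1 0 = a) : prep a (shift p) = p := by
  apply Subtype.ext; funext i
  cases i with
  | zero => exact h.symm
  | succ j => rfl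

lemma shift_image_s18 (a : ℕ) (B : Set PS) :
    shift '' (B ∩ {p : PS | p.1 0 = a}) = prep a ⁻¹' B := by
  ext q
  constructor
  · rintro ⟨p, ⟨hB, hp0⟩, rfl⟩
    simpa [Set.mem_preimage, prep_shift hp0] using hB
  · intro hq
    exact ⟨prep a q, ⟨hq, rfl⟩, shift_prep a q⟩

lemma Z0_eq (a : ℕ) : {p : PS | p.1 0 = a} = cylW [a] := by
  ext p
  simp only [Set.mem_setOf_eq, mem_cylW, List.length_cons, List.length_nil]
  constructor
  · intro h i hi
    interval_cases i
    · exact h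
  · intro h; exact h 0 (by omega)

lemma cylW_cons (n : ℕ) (w : List ℕ) (q : PS) :
    prep n q ∈ cylW (n :: w) ↔ q ∈ cylW w := by
  simp only [mem_cylW]
  constructor
  · intro h i hi
    exact h (i+1) (by simpa using Nat.succ_lt_succ hi)
  · intro h i hi
    cases i with
    | zero => rfl
    | succ j => exact h j (by simpa using Nat.lt_of_succ_lt_succ hi)

lemma shift_image_cylW (n : ℕ) (w : List ℕ) :
    shift '' (cylW (n :: w) ∩ {p : PS | p.1 0 = n}) = cylW w := by
  rw [shift_image_s18]
  ext q
  simp only [Set.mem_preimage]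
  exact cylW_cons n w q

lemma cylW_cons_inter (n : ℕ) (w : List ℕ) :
    cylW (n :: w) ∩ {p : PS | p.1 0 = n} = cylW (n :: w) := by
  apply Set.inter_eq_self_of_subset_left
  intro p hp
  rw [mem_cylW] at hp
  exact hp 0 (by simp)

/-- Part 3: cylinder measure formula for conformal probability measures. -/
lemma conformal_cylW (t : ℕ → ℝ) (β : ℝ) {m : Measure PS}
    (hm : IsConformal OinfGraph t β m) (h1 : m Set.univ = 1) :
    ∀ w : List ℕ, m (cylW w) = E (-(β * (w.map t).sum)) := by
  intro w
  induction w with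
  | nil => simpa [cylW_nil, E] using h1
  | cons n w ih =>
    have hc := hm.conformal n (cylW (n :: w)) (meas_cylW _)
    rw [shift_image_cylW, cylW_cons_inter] at hc
    rw [ih, show (ENNReal.ofReal (Real.exp (β * t n))) = E (β * t n) from rfl] at hc
    have : E (-(β * t n)) * (E (β * t n) * m (cylW (n :: w)))
        = E (-(β * t n)) * E (-(β * (w.map t).sum)) := by
      rw [← hc]
    rw [← mul_assoc, mul_comm (E (-(β * t n))) (E (β * t n)), E_mul_E_neg,
      one_mul] at this
    rw [this, ← E_add]
    congr 1
    simp only [List.map_cons, List.sum_cons]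
    ring

end Aux3
section Aux4
open CDG

lemma E_neg_mul_E (x : ℝ) : E (-x) * E x = 1 := by
  rw [← E_add, neg_add_cancel, E, Real.exp_zero, ENNReal.ofReal_one]

lemma prep_preimage_nil (a : ℕ) : prep a ⁻¹' cylW [] = Set.univ := by
  rw [cylW_nil]; rfl

lemma prep_preimage_cons_self (a : ℕ) (w : List ℕ) :
    prep a ⁻¹' cylW (a :: w) = cylW w := by
  ext q; exact cylW_cons a w q

lemma prep_preimage_cons_ne {a n : ℕ} (h : n ≠ a) (w : List ℕ) :
    prep a ⁻¹' cylW (n :: w) = ∅ := by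
  ext q
  simp only [Set.mem_preimage, Set.mem_empty_iff_false, iff_false]
  intro hq
  rw [mem_cylW] at hq
  exact h (hq 0 (by simp)).symm

lemma cylW_cons_inter_ne {a n : ℕ} (h : n ≠ a) (w : List ℕ) :
    cylW (n :: w) ∩ {p : PS | p.1 0 = a} = ∅ := by
  ext p
  simp only [Set.mem_inter_iff, Set.mem_setOf_eq, Set.mem_empty_iff_false, iff_false]
  rintro ⟨hp, hp0⟩
  rw [mem_cylW] at hp
  exact h ((hp 0 (by simp)).symm.trans hp0)

lemma isConformal_of_cylW (t : ℕ → ℝ) (β : ℝ) {m : Measure PS}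
    (h1 : m Set.univ = 1)
    (hcyl : ∀ w : List ℕ, m (cylW w) = E (-(β * (w.map t).sum))) :
    CDG.IsConformal OinfGraph t β m := by
  have hfin : IsFiniteMeasure m := ⟨by rw [h1]; exact ENNReal.one_lt_top⟩
  constructor
  · intro h0
    rw [h0] at h1
    simp at h1
  · intro v
    exact lt_of_le_of_lt (measure_mono (Set.subset_univ _)) (by rw [h1]; exact ENNReal.one_lt_top)
  · intro a B hB
    change ℕ at a
    have hZ0 : m {p : PS | p.1 0 = a} = E (-(β * t a)) := by
      rw [Z0_eq]
      have := hcyl [a]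
      simpa using this
    have key : m.map (prep a) = E (β * t a) • m.restrict {p : PS | p.1 0 = a} := by
      have hfin2 : IsFiniteMeasure (m.map (prep a)) := by
        constructor
        rw [Measure.map_apply (prep_meas a) MeasurableSet.univ]
        simpa [h1] using ENNReal.one_lt_top
      apply ext_meas
      intro w
      rw [Measure.map_apply (prep_meas a) (meas_cylW w)]
      rw [Measure.smul_apply, Measure.restrict_apply (meas_cylW w), smul_eq_mul]
      cases w with
      | nil =>
        rw [prep_preimage_nil, h1, cylW_nil, Set.univ_inter, hZ0, E_mul_E_neg]
      | cons n w =>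
        rcases eq_or_ne n a with rfl | hne
        · rw [prep_preimage_cons_self, cylW_cons_inter, hcyl, hcyl]
          simp only [List.map_cons, List.sum_cons]
          rw [show -(β * (t n + (w.map t).sum)) = -(β * t n) + -(β * (w.map t).sum) by ring,
            E_add, ← mul_assoc, E_mul_E_neg, one_mul]
        · rw [prep_preimage_cons_ne hne, cylW_cons_inter_ne hne]
          simp
    rw [shift_image_s18]
    rw [← Measure.map_apply (prep_meas a) hB, key, Measure.smul_apply,
      Measure.restrict_apply hB, smul_eq_mul]
    rfl

lemma univ_eq_iUnion : (Set.univ : Set PS) = ⋃ n : ℕ, cylW [n] := by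
  ext p
  simp only [Set.mem_univ, Set.mem_iUnion, true_iff]
  exact ⟨show ℕ from p.1 0, by rw [← Z0_eq]; rfl⟩

lemma disj_cylW : Pairwise (Function.onFun Disjoint fun n : ℕ => cylW [n]) := by
  intro n n' hne
  simp only [Function.onFun, Set.disjoint_left]
  intro p hp hp'
  rw [← Z0_eq] at hp hp'
  exact hne (hp.symm.trans hp')

end Aux4
section Aux5
open CDG

variable (r : ℕ → ℝ)

noncomputable def cpart (n : ℕ) : ℝ := ∑ j ∈ Finset.range n, r j

noncomputable def phi (x : ℝ) : ℕ := sInf {k | x < cpart r (k + 1)}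

noncomputable def stepf (x : ℝ) : ℝ := (x - cpart r (phi r x)) / r (phi r x)

noncomputable def Ff (x : ℝ) : ℕ → ℕ := fun i => phi r ((stepf r)^[i] x)

variable {r}

lemma cpart_succ (n : ℕ) : cpart r (n + 1) = cpart r n + r n :=
  Finset.sum_range_succ r n

section pos
variable (hr : ∀ n, 0 < r n)
include hr

lemma cpart_mono : Monotone (cpart r) := by
  apply monotone_nat_of_le_succ
  intro n
  rw [cpart_succ]
  linarith [hr n]

lemma cpart_nonneg (n : ℕ) : 0 ≤ cpart r n := by
  have := cpart_mono hr (Nat.zero_le n)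
  simpa [cpart] using this

lemma phi_eq_iff (hsum : HasSum r 1) {x : ℝ} (hx0 : 0 ≤ x) (hx1 : x < 1) (n : ℕ) :
    phi r x = n ↔ cpart r n ≤ x ∧ x < cpart r (n + 1) := by
  have hne : {k | x < cpart r (k + 1)}.Nonempty := by
    have ht : Filter.Tendsto (cpart r) Filter.atTop (nhds 1) := hsum.tendsto_sum_nat
    have : ∀ᶠ k in Filter.atTop, x < cpart r k := ht.eventually_const_lt hx1
    obtain ⟨k, hk⟩ := this.exists
    exact ⟨k, lt_of_lt_of_le hk (cpart_mono hr (Nat.le_succ k))⟩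
  constructor
  · rintro rfl
    refine ⟨?_, Nat.sInf_mem hne⟩
    cases h : phi r x with
    | zero => simpa [cpart] using hx0
    | succ m =>
      have hm : m ∉ {k | x < cpart r (k + 1)} := by
        intro hmem
        have := Nat.sInf_le hmem
        rw [show sInf {k | x < cpart r (k + 1)} = phi r x from rfl, h] at this
        omega
      simp only [Set.mem_setOf_eq, not_lt] at hm
      exact hm
  · rintro ⟨h1, h2⟩
    apply le_antisymm
    · exact Nat.sInf_le h2
    · by_contra hlt
      push_neg at hlt
      have hmem := Nat.sInf_mem hne
      have hle : phi r x + 1 ≤ n := hlt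
      have : cpart r (phi r x + 1) ≤ cpart r n := cpart_mono hr hle
      have hx : x < cpart r (phi r x + 1) := hmem
      linarith

omit hr in
lemma stepf_eq {x : ℝ} {n : ℕ} (h : phi r x = n) :
    stepf r x = (x - cpart r n) / r n := by
  rw [stepf, h]

end pos

lemma phi_meas : Measurable (phi r) := by
  apply measurable_to_countable'
  intro n
  have hset : phi r ⁻¹' {n} =
      (Set.Iio (cpart r (n + 1)) ∩ ⋂ m ∈ Finset.range n, Set.Ici (cpart r (m + 1))) ∪
        ((⋂ k, Set.Ici (cpart r (k + 1))) ∩ {x : ℝ | n = 0}) := by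
    ext x
    simp only [Set.mem_preimage, Set.mem_singleton_iff, Set.mem_union, Set.mem_inter_iff,
      Set.mem_Iio, Set.mem_iInter, Set.mem_Ici, Finset.mem_range, Set.mem_setOf_eq]
    constructor
    · rintro rfl
      rcases Set.eq_empty_or_nonempty {k | x < cpart r (k + 1)} with he | hne
      · right
        have h0 : ∀ k, cpart r (k + 1) ≤ x := by
          intro k
          by_contra hk
          push_neg at hk
          exact Set.eq_empty_iff_forall_notMem.mp he k hk
        exact ⟨h0, by rw [phi, he, Nat.sInf_empty]⟩
      · left
        refine ⟨Nat.sInf_mem hne, ?_⟩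
        intro m hm
        by_contra hx
        push_neg at hx
        have := Nat.sInf_le (show m ∈ {k | x < cpart r (k + 1)} from hx)
        rw [show sInf {k | x < cpart r (k + 1)} = phi r x from rfl] at this
        omega
    · rintro (⟨h1, h2⟩ | ⟨h1, rfl⟩)
      · apply le_antisymm
        · exact Nat.sInf_le h1
        · by_contra hlt
          push_neg at hlt
          have hmem := Nat.sInf_mem (⟨n, h1⟩ : Set.Nonempty {k | x < cpart r (k + 1)})
          have h3 := h2 _ hlt
          simp only [Set.mem_setOf_eq] at hmem
          rw [show sInf {k | x < cpart r (k + 1)} = phi r x from rfl] at hmem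
          linarith
      · have he : {k | x < cpart r (k + 1)} = ∅ := by
          apply Set.eq_empty_iff_forall_notMem.mpr
          intro k hk
          simp only [Set.mem_setOf_eq] at hk
          linarith [h1 k]
        rw [phi, he, Nat.sInf_empty]
  rw [hset]
  apply MeasurableSet.union
  · exact measurableSet_Iio.inter
      (MeasurableSet.biInter (Set.to_countable _) fun m _ => measurableSet_Ici)
  · refine (MeasurableSet.iInter fun k => measurableSet_Ici).inter ?_
    by_cases hn : n = 0
    · simp [hn]
    · simp [hn]

lemma stepf_meas : Measurable (stepf r) := by
  have h1 : Measurable fun x : ℝ => cpart r (phi r x) :=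
    Measurable.comp (g := fun n => cpart r n) measurable_from_top phi_meas
  have h2 : Measurable fun x : ℝ => r (phi r x) :=
    Measurable.comp (g := fun n => r n) measurable_from_top phi_meas
  exact (measurable_id.sub h1).div h2

/-- Key interval lemma. -/
lemma key_interval (hr : ∀ n, 0 < r n) (hsum : HasSum r 1) (w : List ℕ) :
    ∃ L : ℝ, 0 ≤ L ∧ L + (w.map r).prod ≤ 1 ∧
      Set.Ico (0 : ℝ) 1 ∩
          {x : ℝ | ∀ i (h : i < w.length), Ff r x i = w.get ⟨i, h⟩} =
        Set.Ico L (L + (w.map r).prod) := by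
  induction w with
  | nil =>
    refine ⟨0, le_refl 0, by simp, ?_⟩
    simp only [List.map_nil, List.prod_nil, List.length_nil, zero_add]
    have : {x : ℝ | ∀ i (h : i < 0), Ff r x i = ([] : List ℕ).get ⟨i, h⟩} = Set.univ := by
      ext x; simp
    rw [this, Set.inter_univ]
  | cons n w ih =>
    obtain ⟨L, hL0, hL1, hset⟩ := ih
    have hRpos : 0 < (w.map r).prod := by
      apply List.prod_pos
      intro x hx
      simp only [List.mem_map] at hx
      obtain ⟨a, _, rfl⟩ := hx
      exact hr a
    have hcn1 : cpart r (n + 1) ≤ 1 := by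
      have := sum_le_hasSum (Finset.range (n + 1)) (fun i _ => (hr i).le) hsum
      simpa [cpart] using this
    refine ⟨cpart r n + r n * L, ?_, ?_, ?_⟩
    · have := cpart_nonneg hr n
      nlinarith [hr n]
    · have : cpart r n + r n * L + (List.map r (n :: w)).prod
          = cpart r n + r n * (L + (w.map r).prod) := by
        simp only [List.map_cons, List.prod_cons]; ring
      rw [this]
      have h2 : r n * (L + (w.map r).prod) ≤ r n := by
        nlinarith [hr n]
      calc cpart r n + r n * (L + (w.map r).prod) ≤ cpart r n + r n := by linarith
        _ = cpart r (n + 1) := (cpart_succ n).symm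
        _ ≤ 1 := hcn1
    · ext x
      simp only [Set.mem_inter_iff, Set.mem_Ico, Set.mem_setOf_eq, List.map_cons,
        List.prod_cons, List.length_cons]
      constructor
      · rintro ⟨⟨hx0, hx1⟩, hF⟩
        have hF0 : phi r x = n := by
          have := hF 0 (Nat.succ_pos _)
          simpa [Ff] using this
        have hcx : cpart r n ≤ x ∧ x < cpart r (n + 1) :=
          (phi_eq_iff hr hsum hx0 hx1 n).mp hF0
        set y := stepf r x with hy
        have hyeq : y = (x - cpart r n) / r n := stepf_eq hF0
        have hy0 : 0 ≤ y := by
          rw [hyeq]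
          apply div_nonneg (by linarith [hcx.1]) (hr n).le
        have hy1 : y < 1 := by
          rw [hyeq, div_lt_one (hr n)]
          have := hcx.2
          rw [cpart_succ] at this
          linarith
        have hyF : ∀ i (h : i < w.length), Ff r y i = w.get ⟨i, h⟩ := by
          intro i h
          have := hF (i + 1) (Nat.succ_lt_succ h)
          simpa [Ff, Function.iterate_succ_apply] using this
        have hymem : y ∈ Set.Ico L (L + (w.map r).prod) := by
          rw [← hset]
          exact ⟨⟨hy0, hy1⟩, hyF⟩
        obtain ⟨hyL, hyR⟩ := hymem
        have hxeq : x = cpart r n + r n * y := by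
          rw [hyeq]
          field_simp [(hr n).ne']
          ring
        constructor
        · rw [hxeq]
          nlinarith [hr n]
        · rw [hxeq]
          nlinarith [hr n]
      · rintro ⟨hxL, hxR⟩
        have hcn0 : 0 ≤ cpart r n := cpart_nonneg hr n
        have hx0 : 0 ≤ x := by nlinarith [hr n]
        have hxlt : x < cpart r n + r n := by nlinarith [hr n]
        have hx1 : x < 1 := by
          have := cpart_succ (r := r) n
          linarith [hcn1]
        have hphi : phi r x = n := by
          rw [phi_eq_iff hr hsum hx0 hx1 n, cpart_succ]
          constructor
          · nlinarith [hr n]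
          · exact hxlt
        set y := stepf r x with hy
        have hyeq : y = (x - cpart r n) / r n := stepf_eq hphi
        have hymem : y ∈ Set.Ico L (L + (w.map r).prod) := by
          rw [hyeq]
          constructor
          · rw [le_div_iff₀ (hr n)]
            nlinarith
          · rw [div_lt_iff₀ (hr n)]
            nlinarith
        rw [← hset] at hymem
        obtain ⟨⟨hy0, hy1⟩, hyF⟩ := hymem
        refine ⟨⟨hx0, hx1⟩, ?_⟩
        intro i hi
        cases i with
        | zero => simpa [Ff] using hphi
        | succ j =>
          have := hyF j (Nat.lt_of_succ_lt_succ hi)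
          simpa [Ff, Function.iterate_succ_apply] using this

noncomputable def FP (r : ℕ → ℝ) (x : ℝ) : PS := ⟨Ff r x, fun _ => rfl⟩

lemma FP_meas : Measurable (FP r) := by
  apply Measurable.subtype_mk
  apply measurable_pi_lambda
  intro i
  exact phi_meas.comp (stepf_meas.iterate i)

noncomputable def mCon (r : ℕ → ℝ) : Measure PS :=
  (volume.restrict (Set.Ico (0 : ℝ) 1)).map (FP r)

lemma mCon_univ : mCon r Set.univ = 1 := by
  rw [mCon, Measure.map_apply FP_meas MeasurableSet.univ, Set.preimage_univ,
    Measure.restrict_apply MeasurableSet.univ, Set.univ_inter, Real.volume_Ico]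
  norm_num

lemma mCon_cylW (hr : ∀ n, 0 < r n) (hsum : HasSum r 1) (w : List ℕ) :
    mCon r (cylW w) = ENNReal.ofReal ((w.map r).prod) := by
  obtain ⟨L, _, _, hset⟩ := key_interval hr hsum w
  rw [mCon, Measure.map_apply FP_meas (meas_cylW w),
    Measure.restrict_apply (FP_meas (meas_cylW w))]
  have hpre : FP r ⁻¹' cylW w = {x : ℝ | ∀ i (h : i < w.length), Ff r x i = w.get ⟨i, h⟩} := by
    ext x
    simp only [Set.mem_preimage, Set.mem_setOf_eq, mem_cylW]
    rfl
  rw [hpre, Set.inter_comm, hset, Real.volume_Ico, add_sub_cancel_left]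

end Aux5

open CDG in
/-- for the graph of `O_∞` with potential `F(a_n) = t_n`, there is an
`e^{βF}`-conformal probability measure iff `Σ_n e^{-β t_n} = 1`, in which case it is
unique and is the product measure: `m(Z(a_{n_1}⋯a_{n_k})) = e^{-β(t_{n_1}+⋯+t_{n_k})}`. -/
theorem stmt18 (t : ℕ → ℝ) (β : ℝ) :
    ((∃ m : MeasureTheory.Measure OinfGraph.PathSpace,
        IsConformal OinfGraph t β m ∧ m Set.univ = 1) ↔
      ∑' n : ℕ, ENNReal.ofReal (Real.exp (-(β * t n))) = 1) ∧
    (∀ m m' : MeasureTheory.Measure OinfGraph.PathSpace,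
      IsConformal OinfGraph t β m → m Set.univ = 1 →
      IsConformal OinfGraph t β m' → m' Set.univ = 1 → m = m') ∧
    (∀ m : MeasureTheory.Measure OinfGraph.PathSpace,
      IsConformal OinfGraph t β m → m Set.univ = 1 →
      ∀ w : List ℕ,
        m (cyl (wordPath w)) = ENNReal.ofReal (Real.exp (-(β * (w.map t).sum)))) := by
  have part3 : ∀ m : Measure PS, IsConformal OinfGraph t β m → m Set.univ = 1 →
      ∀ w : List ℕ, m (cylW w) = E (-(β * (w.map t).sum)) := by
    intro m hm h1
    exact conformal_cylW t β hm h1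
  refine ⟨⟨?_, ?_⟩, ?_, ?_⟩
  · -- forward: existence implies sum = 1
    rintro ⟨m, hm, h1⟩
    have hcyl := part3 m hm h1
    have hunion : m (Set.univ : Set PS) = ∑' n : ℕ, m (cylW [n]) := by
      rw [univ_eq_iUnion]
      exact measure_iUnion disj_cylW fun n => meas_cylW [n]
    rw [h1] at hunion
    have : ∀ n : ℕ, m (cylW [n]) = ENNReal.ofReal (Real.exp (-(β * t n))) := by
      intro n
      rw [hcyl [n]]
      simp [E]
    rw [tsum_congr this] at hunion
    exact hunion.symm
  · -- backward: construction
    intro hsum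
    set r : ℕ → ℝ := fun n => Real.exp (-(β * t n)) with hrdef
    have hrpos : ∀ n, 0 < r n := fun n => Real.exp_pos _
    have hsummable : Summable r := by
      have h := ENNReal.summable_toReal (by rw [hsum]; exact ENNReal.one_ne_top :
        ∑' n, ENNReal.ofReal (r n) ≠ ⊤)
      refine h.congr fun n => ?_
      rw [ENNReal.toReal_ofReal (hrpos n).le]
    have htsum : ∑' n, r n = 1 := by
      have := ENNReal.ofReal_tsum_of_nonneg (fun n => (hrpos n).le) hsummable
      rw [hsum] at this
      exact ENNReal.ofReal_eq_one.mp this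
    have hhassum : HasSum r 1 := htsum ▸ hsummable.hasSum
    have hprod : ∀ w : List ℕ, (w.map r).prod = Real.exp (-(β * (w.map t).sum)) := by
      intro w
      induction w with
      | nil => simp
      | cons n w ih =>
        simp only [List.map_cons, List.prod_cons, List.sum_cons, ih]
        rw [← Real.exp_add]
        congr 1
        ring
    refine ⟨mCon r, ?_, mCon_univ⟩
    apply isConformal_of_cylW t β mCon_univ
    intro w
    rw [mCon_cylW hrpos hhassum w, hprod w]
    rfl
  · -- uniqueness
    intro m m' hm h1 hm' h1'
    have : IsFiniteMeasure m := ⟨by rw [h1]; exact ENNReal.one_lt_top⟩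
    apply ext_meas
    intro w
    rw [part3 m hm h1 w, part3 m' hm' h1' w]
  · -- cylinder formula
    intro m hm h1 w
    exact part3 m hm h1 w
end
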